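/- arXiv:1601.07887 — 5 statements merged into one kernel-verified Lean document; each statement's English description precedes it below -/
import Mathlib

section
/- Let n ≥ 1 be an integer and let f : [α,β] → ℝ be n+2 times continuously differentiable. Suppose there are positive parameters M, T with M ≥ β−α and positive constants C_r such that |f^{(r)}(x)| ≤ C_r T/M^r on [α,β] for r = 2,…,n+2, and suppose f'(x) and f''(x) do not change signs on [α,β] and f' never vanishes there. Then ∫_α^β e(f(x)) dx = [e(f(x)) Σ_{i=1}^{n} H_i(x)]_α^β + O( Σ_{j=1}^{n} T^j / (min_{[α,β]}|f'|^{n+j+1} · M^{n+j}) ), where H_1(x) = 1/(2πi f'(x)), H_i(x) = −H'_{i−1}(x)/(2πi f'(x)), and the implied constant depends only on n and the constants C_r. -/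
/-- `e(t) = exp(2πit)`. -/
noncomputable def e (t : ℝ) : ℂ := Complex.exp (2 * Real.pi * Complex.I * t)

namespace WSP


/-- All lists obtained from `l` by incrementing exactly one entry. -/
def dlists : List ℕ → List (List ℕ)
  | [] => []
  | a :: t => ((a+1) :: t) :: (dlists t).map (a :: ·)

/-- A symbolic term `c * ∏_{a ∈ l} f^{(a)} / (f')^p`. -/
structure Tm where
  c : ℝ
  l : List ℕ
  p : ℕ

/-- Symbolic derivative of a term. -/
noncomputable def dTm (t : Tm) : List Tm :=
  (dlists t.l).map (fun l' => ⟨t.c, l', t.p⟩) ++ [⟨-(t.p : ℝ) * t.c, 2 :: t.l, t.p + 1⟩]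

/-- Symbolic derivative of a sum of terms. -/
noncomputable def dT (ts : List Tm) : List Tm := ts.flatMap dTm

/-- `H_{i+1}` terms from `H_i` terms: `-(derivative)/f'` (the `2πi` factor is kept outside). -/
noncomputable def stepT (ts : List Tm) : List Tm := (dT ts).map fun t => ⟨-t.c, t.l, t.p + 1⟩

/-- The symbolic terms of `H_i` (times `(2πi)^i`). -/
noncomputable def Hterms : ℕ → List Tm
  | 0 => []
  | 1 => [⟨1, [], 1⟩]
  | (i+2) => stepT (Hterms (i+1))

lemma dlists_spec {lo hi : ℕ} :
    ∀ (l : List ℕ), (∀ a ∈ l, lo ≤ a ∧ a ≤ hi) →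
    ∀ l' ∈ dlists l, l'.length = l.length ∧ l'.sum = l.sum + 1 ∧
      ∀ a ∈ l', lo ≤ a ∧ a ≤ hi + 1
  | [], _ => by simp [dlists]
  | a :: t, h => by
    intro l' hl'
    rcases List.mem_cons.1 hl' with rfl | hl'
    · refine ⟨by simp, by simp [Nat.add_right_comm], ?_⟩
      intro b hb
      rcases List.mem_cons.1 hb with rfl | hb
      · have := h a (List.mem_cons_self)
        exact ⟨this.1.trans (Nat.le_succ a), Nat.succ_le_succ this.2⟩
      · have := h b (List.mem_cons_of_mem _ hb)
        exact ⟨this.1, this.2.trans (Nat.le_succ hi)⟩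
    · rcases List.mem_map.1 hl' with ⟨l'', hl'', rfl⟩
      have ht : ∀ b ∈ t, lo ≤ b ∧ b ≤ hi := fun b hb => h b (List.mem_cons_of_mem _ hb)
      have := dlists_spec t ht l'' hl''
      refine ⟨by simp [this.1], by simp [this.2.1, Nat.add_assoc], ?_⟩
      intro b hb
      rcases List.mem_cons.1 hb with rfl | hb
      · have := h b (List.mem_cons_self)
        exact ⟨this.1, this.2.trans (Nat.le_succ hi)⟩
      · exact this.2.2 b hb

/-- Invariant satisfied by the terms of `H_i`. -/
def Inv (i : ℕ) (t : Tm) : Prop :=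
  t.p = i + t.l.length ∧ t.l.sum + 1 = t.p ∧ ∀ a ∈ t.l, 2 ≤ a ∧ a ≤ i

/-- Invariant satisfied by the terms of `H_i'`. -/
def InvD (i : ℕ) (t : Tm) : Prop :=
  t.p = i + t.l.length ∧ t.l.sum = t.p ∧ ∀ a ∈ t.l, 2 ≤ a ∧ a ≤ i + 1

lemma two_mul_len_le_sum : ∀ (l : List ℕ), (∀ a ∈ l, 2 ≤ a) → 2 * l.length ≤ l.sum
  | [], _ => by simp
  | a :: l, h => by
    simp only [List.sum_cons, List.length_cons]
    have h2 := h a (List.mem_cons_self)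
    have := two_mul_len_le_sum l (fun b hb => h b (List.mem_cons_of_mem _ hb))
    omega

lemma invD_of_inv {i : ℕ} {t : Tm} (h : Inv i t) : ∀ u ∈ dTm t, InvD i u := by
  obtain ⟨hp, hsum, hent⟩ := h
  have hi : 1 ≤ i := by
    have := two_mul_len_le_sum t.l (fun a ha => (hent a ha).1)
    omega
  intro u hu
  rcases List.mem_append.1 hu with hu | hu
  · rcases List.mem_map.1 hu with ⟨l', hl', rfl⟩
    obtain ⟨hlen, hsum', hent'⟩ := dlists_spec t.l hent l' hl'
    refine ⟨?_, ?_, hent'⟩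
    · show t.p = i + l'.length; omega
    · show l'.sum = t.p; omega
  · rcases List.mem_singleton.1 hu with rfl
    refine ⟨?_, ?_, ?_⟩
    · show t.p + 1 = i + (2 :: t.l).length; simp; omega
    · show (2 :: t.l).sum = t.p + 1; simp; omega
    · intro a ha
      rcases List.mem_cons.1 ha with rfl | ha
      · exact ⟨le_refl 2, by omega⟩
      · have := hent a ha; exact ⟨this.1, by omega⟩

lemma inv_Hterms : ∀ i, 1 ≤ i → ∀ t ∈ Hterms i, Inv i t := by
  intro i
  induction i with
  | zero => omega
  | succ i ih =>
    intro _ t ht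
    rcases Nat.eq_or_lt_of_le (Nat.one_le_iff_ne_zero.2 (Nat.succ_ne_zero i)) with h1 | h1
    · -- i + 1 = 1
      have : i = 0 := by omega
      subst this
      simp only [Hterms, List.mem_singleton] at ht
      subst ht
      exact ⟨rfl, rfl, by simp⟩
    · -- i ≥ 1
      have hi : 1 ≤ i := by omega
      obtain ⟨j, rfl⟩ : ∃ j, i = j + 1 := ⟨i - 1, by omega⟩
      have ht' : t ∈ stepT (Hterms (j+1)) := ht
      rcases List.mem_map.1 ht' with ⟨u, hu, rfl⟩
      rcases List.mem_flatMap.1 hu with ⟨v, hv, huv⟩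
      have hinv := ih hi v hv
      have hD := invD_of_inv hinv u huv
      obtain ⟨hp, hsum, hent⟩ := hD
      refine ⟨?_, ?_, ?_⟩
      · show u.p + 1 = (j + 2) + u.l.length; omega
      · show u.l.sum + 1 = u.p + 1; omega
      · intro a ha
        have := hent a ha; exact ⟨this.1, by omega⟩

lemma three_mul_len_le_sum : ∀ (l : List ℕ), (∀ a ∈ l, 3 ≤ a) → 3 * l.length ≤ l.sum
  | [], _ => by simp
  | a :: l, h => by
    simp only [List.sum_cons, List.length_cons]
    have h2 := h a (List.mem_cons_self)
    have := three_mul_len_le_sum l (fun b hb => h b (List.mem_cons_of_mem _ hb))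
    omega

/-- length bounds for terms of `Hterms i`. -/
lemma Inv.len_le {i : ℕ} {t : Tm} (h : Inv i t) : t.l.length + 1 ≤ i := by
  obtain ⟨hp, hsum, hent⟩ := h
  have := two_mul_len_le_sum t.l (fun a ha => (hent a ha).1)
  omega

lemma Inv.one_le_len {i : ℕ} {t : Tm} (h : Inv i t) (hi : 2 ≤ i) : 1 ≤ t.l.length := by
  obtain ⟨hp, hsum, hent⟩ := h
  rcases hl : t.l with _ | ⟨a, l⟩
  · rw [hl] at hsum; simp at hsum; omega
  · simp [hl]


noncomputable def tval (f : ℝ → ℝ) (s : Set ℝ) (t : Tm) (x : ℝ) : ℝ :=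
  t.c * (t.l.map fun a => iteratedDerivWithin a f s x).prod / (derivWithin f s x) ^ t.p

noncomputable def sumT (f : ℝ → ℝ) (s : Set ℝ) (ts : List Tm) (x : ℝ) : ℝ :=
  (ts.map fun t => tval f s t x).sum

variable {f : ℝ → ℝ} {s : Set ℝ} {x : ℝ} {t : Tm} {ts us : List Tm}

@[simp] lemma sumT_nil : sumT f s [] x = 0 := rfl
@[simp] lemma sumT_cons : sumT f s (t :: ts) x = tval f s t x + sumT f s ts x := by
  simp [sumT]
lemma sumT_append : sumT f s (ts ++ us) x = sumT f s ts x + sumT f s us x := by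
  simp [sumT]

lemma list_sum_map_div {α : Type*} (L : List α) (g : α → ℝ) (c d : ℝ) :
    (L.map fun a => c * g a / d).sum = c * (L.map g).sum / d := by
  induction L with
  | nil => simp
  | cons a L ih => simp only [List.map_cons, List.sum_cons, ih]; ring

lemma list_prod_nonneg {l : List ℕ} {h : ℕ → ℝ} (hh : ∀ a ∈ l, 0 ≤ h a) :
    0 ≤ (l.map h).prod := by
  induction l with
  | nil => simp
  | cons a l ih =>
    simp only [List.map_cons, List.prod_cons]
    exact mul_nonneg (hh a (by simp)) (ih fun b hb => hh b (by simp [hb]))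

lemma list_abs_prod_le {l : List ℕ} {g h : ℕ → ℝ} (hb : ∀ a ∈ l, |g a| ≤ h a) :
    |(l.map g).prod| ≤ (l.map h).prod := by
  induction l with
  | nil => simp
  | cons a l ih =>
    simp only [List.map_cons, List.prod_cons, abs_mul]
    exact mul_le_mul (hb a (by simp)) (ih fun b hb' => hb b (by simp [hb'])) (abs_nonneg _)
      ((abs_nonneg _).trans (hb a (by simp)))

lemma list_prod_le_prod {l : List ℕ} {g h : ℕ → ℝ} (hg : ∀ a ∈ l, 0 ≤ g a)
    (hb : ∀ a ∈ l, g a ≤ h a) : (l.map g).prod ≤ (l.map h).prod := by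
  have := list_abs_prod_le (l := l) (g := g) (h := h)
    (fun a ha => by rw [abs_of_nonneg (hg a ha)]; exact hb a ha)
  calc (l.map g).prod ≤ |(l.map g).prod| := le_abs_self _
    _ ≤ _ := this

lemma list_prod_CTM {C : ℕ → ℝ} {M T : ℝ} (hM : M ≠ 0) : ∀ (l : List ℕ),
    (l.map fun a => C a * T / M ^ a).prod = (l.map C).prod * T ^ l.length / M ^ l.sum
  | [] => by simp
  | a :: l => by
    simp only [List.map_cons, List.prod_cons, List.length_cons, List.sum_cons,
      list_prod_CTM hM l]
    rw [pow_add, pow_succ]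
    field_simp
    ring

lemma list_abs_sum_le {ts : List Tm} {v w : Tm → ℝ} (hb : ∀ t ∈ ts, |v t| ≤ w t) :
    |(ts.map v).sum| ≤ (ts.map w).sum := by
  induction ts with
  | nil => simp
  | cons t ts ih =>
    simp only [List.map_cons, List.sum_cons]
    exact (abs_add_le _ _).trans
      (add_le_add (hb t (by simp)) (ih fun u hu => hb u (by simp [hu])))

lemma hasDeriv_listprod (g : ℕ → ℝ → ℝ) (s : Set ℝ) (x : ℝ) :
    ∀ (l : List ℕ), (∀ a ∈ l, HasDerivWithinAt (g a) (g (a+1) x) s x) →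
    HasDerivWithinAt (fun y => (l.map fun a => g a y).prod)
      (((dlists l).map fun l' => (l'.map fun a => g a x).prod).sum) s x
  | [], _ => by
    simp only [dlists, List.map_nil, List.prod_nil, List.sum_nil]
    exact hasDerivWithinAt_const x s 1
  | a :: tl, h => by
    have IH := hasDeriv_listprod g s x tl (fun b hb => h b (List.mem_cons_of_mem _ hb))
    have ha := h a (List.mem_cons_self)
    have hmul := ha.mul IH
    have h2 : HasDerivWithinAt (fun y => (((a :: tl).map fun a => g a y)).prod)
        (g (a+1) x * (tl.map fun a => g a x).prod
          + g a x * ((dlists tl).map fun l' => (l'.map fun a => g a x).prod).sum) s x := by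
      simp only [List.map_cons, List.prod_cons]; exact hmul
    convert h2 using 1
    simp only [dlists, List.map_cons, List.map_map, List.sum_cons, List.prod_cons,
      Function.comp_def, ← List.sum_map_mul_left]

lemma hasDeriv_tval
    (hl : ∀ a ∈ t.l, HasDerivWithinAt (iteratedDerivWithin a f s)
      (iteratedDerivWithin (a+1) f s x) s x)
    (hD : HasDerivWithinAt (derivWithin f s) (iteratedDerivWithin 2 f s x) s x)
    (hne : derivWithin f s x ≠ 0) (hp : 1 ≤ t.p) :
    HasDerivWithinAt (tval f s t) (sumT f s (dTm t) x) s x := by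
  obtain ⟨c, l, p⟩ := t
  simp only at hl hp ⊢
  obtain ⟨q, rfl⟩ : ∃ q, p = q + 1 := ⟨p - 1, by omega⟩
  have hP := hasDeriv_listprod (fun a => iteratedDerivWithin a f s) s x l hl
  have hnum := hP.const_mul c
  have hden := hD.pow (q + 1)
  have hne' : derivWithin f s x ^ (q + 1) ≠ 0 := pow_ne_zero _ hne
  have hdiv := hnum.div hden hne'
  have heq : (fun y => c * ((l.map fun a => iteratedDerivWithin a f s y).prod) /
      (derivWithin f s y) ^ (q+1)) = tval f s ⟨c, l, q+1⟩ := rfl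
  replace hdiv : HasDerivWithinAt (tval f s ⟨c, l, q+1⟩) _ s x := hdiv
  convert hdiv using 1
  simp only [dTm, sumT, List.map_append, List.sum_append, List.map_map, Function.comp_def,
    tval, List.map_cons, List.prod_cons, List.map_nil, List.sum_cons, List.sum_nil, Pi.pow_apply]
  rw [list_sum_map_div]
  have hq1 : ((q + 1 : ℕ) : ℝ) = (q : ℝ) + 1 := by push_cast; ring
  set D := derivWithin f s x
  set P := (l.map fun a => iteratedDerivWithin a f s x).prod
  set S := ((dlists l).map fun l' => (l'.map fun a => iteratedDerivWithin a f s x).prod).sum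
  set F2 := iteratedDerivWithin 2 f s x
  have h1 : (q + 1 : ℕ) - 1 = q := by omega
  rw [h1]
  field_simp
  ring

lemma hasDeriv_sumT
    (hD : HasDerivWithinAt (derivWithin f s) (iteratedDerivWithin 2 f s x) s x)
    (hne : derivWithin f s x ≠ 0) :
    ∀ (ts : List Tm), (∀ t ∈ ts, 1 ≤ t.p ∧ ∀ a ∈ t.l,
      HasDerivWithinAt (iteratedDerivWithin a f s) (iteratedDerivWithin (a+1) f s x) s x) →
    HasDerivWithinAt (sumT f s ts) (sumT f s (dT ts) x) s x
  | [], _ => by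
    simp only [dT, List.flatMap_nil]
    exact (hasDerivWithinAt_const x s 0).congr (fun y _ => by simp) (by simp)
  | t :: ts, h => by
    have ht := h t (by simp)
    have IH := hasDeriv_sumT hD hne ts (fun u hu => h u (by simp [hu]))
    have h1 := (hasDeriv_tval ht.2 hD hne ht.1).add IH
    have hfl : dT (t :: ts) = dTm t ++ dT ts := by simp [dT]
    rw [hfl, show sumT f s (dTm t ++ dT ts) x = sumT f s (dTm t) x + sumT f s (dT ts) x
      from sumT_append]
    exact h1.congr (fun y _ => sumT_cons) sumT_cons

lemma contOn_listprod {g : ℕ → ℝ → ℝ} :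
    ∀ (l : List ℕ), (∀ a ∈ l, ContinuousOn (g a) s) →
    ContinuousOn (fun y => (l.map fun a => g a y).prod) s
  | [], _ => by simpa using continuousOn_const
  | a :: tl, h => by
    simp only [List.map_cons, List.prod_cons]
    exact (h a (by simp)).mul (contOn_listprod tl fun b hb => h b (by simp [hb]))

lemma contOn_tval (hl : ∀ a ∈ t.l, ContinuousOn (iteratedDerivWithin a f s) s)
    (hD : ContinuousOn (derivWithin f s) s) (hne : ∀ x ∈ s, derivWithin f s x ≠ 0) :
    ContinuousOn (tval f s t) s := by
  unfold tval
  exact (continuousOn_const.mul (contOn_listprod _ hl)).div (hD.pow _)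
    (fun x hx => pow_ne_zero _ (hne x hx))

lemma contOn_sumT
    (hD : ContinuousOn (derivWithin f s) s) (hne : ∀ x ∈ s, derivWithin f s x ≠ 0) :
    ∀ (ts : List Tm), (∀ t ∈ ts, ∀ a ∈ t.l, ContinuousOn (iteratedDerivWithin a f s) s) →
    ContinuousOn (sumT f s ts) s
  | [], _ => (continuousOn_const (c := (0:ℝ))).congr (fun y _ => sumT_nil)
  | t :: ts, h => by
    have : ContinuousOn (fun y => tval f s t y + sumT f s ts y) s :=
      (contOn_tval (h t (by simp)) hD hne).add
        (contOn_sumT hD hne ts (fun u hu => h u (by simp [hu])))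
    exact this.congr (fun y _ => by simp)



lemma Hterms_succ {i : ℕ} (hi : 1 ≤ i) : Hterms (i+1) = stepT (Hterms i) := by
  obtain ⟨j, rfl⟩ : ∃ j, i = j + 1 := ⟨i - 1, by omega⟩
  rfl

variable {f : ℝ → ℝ} {s : Set ℝ} {x : ℝ} {t : Tm} {ts : List Tm}

lemma tval_shift : tval f s ⟨-t.c, t.l, t.p+1⟩ x = -(tval f s t x / derivWithin f s x) := by
  unfold tval
  simp only
  rw [pow_succ, ← div_div]
  ring

lemma sumT_map_shift : ∀ (L : List Tm),
    sumT f s (L.map fun t => (⟨-t.c, t.l, t.p+1⟩ : Tm)) x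
      = -(sumT f s L x / derivWithin f s x)
  | [] => by simp
  | t :: L => by
    simp only [List.map_cons, sumT_cons, sumT_map_shift L, tval_shift]
    ring

lemma sumT_stepT : sumT f s (stepT ts) x = -(sumT f s (dT ts) x / derivWithin f s x) :=
  sumT_map_shift _

lemma sumT_Hterms_one : sumT f s (Hterms 1) x = 1 / derivWithin f s x := by
  simp [Hterms, sumT, tval]

lemma list_abs_prod (l : List ℕ) (g : ℕ → ℝ) :
    |(l.map g).prod| = (l.map fun a => |g a|).prod := by
  induction l with
  | nil => simp
  | cons a l ih => simp [abs_mul, ih]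

lemma one_le_list_prod : ∀ (l : List ℕ) (h : ℕ → ℝ), (∀ a ∈ l, 1 ≤ h a) →
    1 ≤ (l.map h).prod
  | [], _, _ => by simp
  | a :: l, h, hh => by
    simp only [List.map_cons, List.prod_cons]
    have h1 := hh a (by simp)
    have h2 := one_le_list_prod l h (fun b hb => hh b (by simp [hb]))
    nlinarith

/-- coefficient controlling a term in the final bound -/
noncomputable def kcoef (C : ℕ → ℝ) (t : Tm) : ℝ :=
  2 * (|t.c| + 1) * ((t.l.map fun a => max (C a) 1).prod)

lemma kcoef_nonneg (C : ℕ → ℝ) (t : Tm) : 0 ≤ kcoef C t := by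
  unfold kcoef
  have h1 : (0:ℝ) ≤ (t.l.map fun a => max (C a) 1).prod :=
    list_prod_nonneg fun a _ => le_trans zero_le_one (le_max_right _ _)
  have h2 : (0:ℝ) ≤ |t.c| + 1 := by positivity
  positivity

lemma kcoef_sum_nonneg (C : ℕ → ℝ) (L : List Tm) : 0 ≤ (L.map (kcoef C)).sum :=
  List.sum_nonneg (by
    intro x hx
    rcases List.mem_map.1 hx with ⟨t, _, rfl⟩
    exact kcoef_nonneg C t)

/-- The constant in the final bound. -/
noncomputable def Kconst (n : ℕ) (C : ℕ → ℝ) : ℝ :=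
  ((dT (Hterms (n+1))).map (kcoef C)).sum + 2 * ((Hterms (n+1)).map (kcoef C)).sum + 1

lemma Kconst_pos (n : ℕ) (C : ℕ → ℝ) : 0 < Kconst n C := by
  unfold Kconst
  have h1 := kcoef_sum_nonneg C (dT (Hterms (n+1)))
  have h2 := kcoef_sum_nonneg C (Hterms (n+1))
  linarith

lemma _root_.HasDerivWithinAt.ofReal_comp' {g : ℝ → ℝ} {u x : ℝ} {s : Set ℝ}
    (hg : HasDerivWithinAt g u s x) :
    HasDerivWithinAt (fun y : ℝ => ((g y : ℝ) : ℂ)) (u : ℂ) s x := by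
  simpa only [Complex.ofRealCLM_apply, Complex.ofReal_one, Complex.real_smul, mul_one, Function.comp_def] using
    Complex.ofRealCLM.hasDerivAt.scomp_hasDerivWithinAt x hg

open intervalIntegral MeasureTheory


lemma core_integral (α β m : ℝ) (hαβ : α < β) (f : ℝ → ℝ)
    (hm0 : 0 < m)
    (hmle : ∀ x ∈ Set.Icc α β, m ≤ |derivWithin f (Set.Icc α β) x|)
    (hne : ∀ x ∈ Set.Icc α β, derivWithin f (Set.Icc α β) x ≠ 0)
    (hDc : ContinuousOn (derivWithin f (Set.Icc α β)) (Set.Icc α β))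
    (hF2c : ContinuousOn (iteratedDerivWithin 2 f (Set.Icc α β)) (Set.Icc α β))
    (hDd : ∀ x ∈ Set.Icc α β, HasDerivWithinAt (derivWithin f (Set.Icc α β))
      (iteratedDerivWithin 2 f (Set.Icc α β) x) (Set.Icc α β) x)
    (hsign1 : (∀ x ∈ Set.Icc α β, 0 ≤ derivWithin f (Set.Icc α β) x) ∨
      (∀ x ∈ Set.Icc α β, derivWithin f (Set.Icc α β) x ≤ 0))
    (hsign2 : (∀ x ∈ Set.Icc α β, 0 ≤ iteratedDerivWithin 2 f (Set.Icc α β) x) ∨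
      (∀ x ∈ Set.Icc α β, iteratedDerivWithin 2 f (Set.Icc α β) x ≤ 0))
    (q : ℕ) :
    (∫ x in α..β, |iteratedDerivWithin 2 f (Set.Icc α β) x| /
        |derivWithin f (Set.Icc α β) x| ^ (q+2))
      ≤ 2 * (1/m) ^ (q+1) := by
  have hab : α ≤ β := hαβ.le
  set s := Set.Icc α β with hs_def
  set D := derivWithin f s with hD_def
  set F2 := iteratedDerivWithin 2 f s with hF2_def
  -- sign constants
  obtain ⟨e1, he1, hε1⟩ : ∃ e : ℝ, (e = 1 ∨ e = -1) ∧ ∀ x ∈ s, |D x| = e * D x := by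
    rcases hsign1 with h | h
    · exact ⟨1, Or.inl rfl, fun x hx => by rw [abs_of_nonneg (h x hx), one_mul]⟩
    · exact ⟨-1, Or.inr rfl, fun x hx => by rw [abs_of_nonpos (h x hx)]; ring⟩
  obtain ⟨e2, he2, hε2⟩ : ∃ e : ℝ, (e = 1 ∨ e = -1) ∧ ∀ x ∈ s, |F2 x| = e * F2 x := by
    rcases hsign2 with h | h
    · exact ⟨1, Or.inl rfl, fun x hx => by rw [abs_of_nonneg (h x hx), one_mul]⟩
    · exact ⟨-1, Or.inr rfl, fun x hx => by rw [abs_of_nonpos (h x hx)]; ring⟩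
  have hb : e1 ^ (q+2) = 1 ∨ e1 ^ (q+2) = -1 := by
    rcases he1 with rfl | rfl
    · left; exact one_pow _
    · rcases Nat.even_or_odd (q+2) with he | ho
      · left; exact he.neg_one_pow
      · right; exact ho.neg_one_pow
  set σ : ℝ := e2 * e1 ^ (q+2) with hσ_def
  have hσabs : |σ| = 1 := by
    rcases he2 with rfl | rfl <;> rcases hb with h | h <;> simp [hσ_def, h]
  have hpt : ∀ x ∈ s, |F2 x| / |D x| ^ (q+2) = σ * (F2 x / D x ^ (q+2)) := by
    intro x hx
    rw [hε1 x hx, hε2 x hx, mul_pow, hσ_def]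
    have hDne := hne x hx
    rcases hb with h | h <;> rw [h] <;> field_simp
  -- antiderivative
  set ψ : ℝ → ℝ := fun x => -((q:ℝ)+1)⁻¹ * (D x)⁻¹ ^ (q+1) with hψ_def
  have hψc : ContinuousOn ψ s :=
    continuousOn_const.mul ((hDc.inv₀ hne).pow (q+1))
  have hGc : ContinuousOn (fun x => F2 x / D x ^ (q+2)) s :=
    hF2c.div (hDc.pow (q+2)) (fun x hx => pow_ne_zero _ (hne x hx))
  have hGint : IntervalIntegrable (fun x => F2 x / D x ^ (q+2)) volume α β := by
    apply ContinuousOn.intervalIntegrable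
    rwa [Set.uIcc_of_le hab]
  have hψd : ∀ x ∈ Set.Ioo α β, HasDerivAt ψ (F2 x / D x ^ (q+2)) x := by
    intro x hx
    have hxs : x ∈ s := Set.Ioo_subset_Icc_self hx
    have hsn : s ∈ nhds x := by rw [hs_def]; exact Icc_mem_nhds hx.1 hx.2
    have hd : HasDerivAt D (F2 x) x := (hDd x hxs).hasDerivAt hsn
    have hinv := hd.inv (hne x hxs)
    have hpow := hinv.pow (q+1)
    have hc := hpow.const_mul (-((q:ℝ)+1)⁻¹)
    refine hc.congr_deriv ?_
    simp only [Pi.inv_apply, inv_pow]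
    have hDne := hne x hxs
    have h1 : (q + 1 : ℕ) - 1 = q := by omega
    rw [h1]
    have hq1 : ((q:ℝ)+1) ≠ 0 := by positivity
    push_cast
    field_simp
    try ring
    try exact Or.inl trivial
  have hFTC : (∫ x in α..β, F2 x / D x ^ (q+2)) = ψ β - ψ α := by
    apply intervalIntegral.integral_eq_sub_of_hasDeriv_right_of_le hab hψc
      (fun x hx => (hψd x hx).hasDerivWithinAt) hGint
  have hcongr : (∫ x in α..β, |F2 x| / |D x| ^ (q+2)) = σ * (ψ β - ψ α) := by
    rw [← hFTC, ← intervalIntegral.integral_const_mul]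
    apply intervalIntegral.integral_congr
    intro x hx
    rw [Set.uIcc_of_le hab] at hx
    exact hpt x hx
  rw [hcongr]
  have hψb : ∀ x ∈ s, |ψ x| ≤ (1/m) ^ (q+1) := by
    intro x hx
    rw [hψ_def]
    simp only [abs_mul, abs_neg, abs_inv, abs_pow]
    have h1 : |((q:ℝ)+1)|⁻¹ ≤ 1 := by
      rw [abs_of_nonneg (by positivity : (0:ℝ) ≤ (q:ℝ)+1)]
      rw [inv_le_one_iff₀]
      right; linarith [Nat.cast_nonneg (α := ℝ) q]
    have h2 : |D x|⁻¹ ^ (q+1) ≤ (1/m) ^ (q+1) := by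
      apply pow_le_pow_left₀ (by positivity)
      rw [one_div]
      exact inv_anti₀ hm0 (hmle x hx)
    calc |((q:ℝ)+1)|⁻¹ * |D x|⁻¹ ^ (q+1) ≤ 1 * ((1/m) ^ (q+1)) :=
          mul_le_mul h1 h2 (by positivity) zero_le_one
      _ = (1/m) ^ (q+1) := one_mul _
  calc σ * (ψ β - ψ α) ≤ |σ * (ψ β - ψ α)| := le_abs_self _
    _ = |ψ β - ψ α| := by rw [abs_mul, hσabs, one_mul]
    _ ≤ |ψ β| + |ψ α| := abs_sub _ _
    _ ≤ (1/m) ^ (q+1) + (1/m) ^ (q+1) := add_le_add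
        (hψb β (Set.right_mem_Icc.2 hab)) (hψb α (Set.left_mem_Icc.2 hab))
    _ = 2 * (1/m) ^ (q+1) := by ring

end WSP

set_option maxHeartbeats 1000000 in
open WSP intervalIntegral MeasureTheory in
/-- explicit first derivative test.  For `f` that is `n+2` times continuously
differentiable on `[α,β]` with `|f^{(r)}| ≤ C_r T/M^r` (`2 ≤ r ≤ n+2`), `f'`, `f''` of
constant sign, and `f'` nonvanishing,
`∫_α^β e(f) = [e(f) Σ_{i=1}^{n} H_i]_α^β + O(Σ_{j=1}^{n} T^j/(min|f'|^{n+j+1} M^{n+j}))`,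
with the implied constant depending only on `n` and the `C_r`. -/
theorem weighted_stationary_phase_stmt1
    (n : ℕ) (hn : 1 ≤ n) (C : ℕ → ℝ) (hCpos : ∀ r, 0 < C r) :
    ∃ K : ℝ, 0 < K ∧
      ∀ (α β M T : ℝ) (f : ℝ → ℝ) (H : ℕ → ℝ → ℂ),
        α < β → 0 < M → 0 < T → β - α ≤ M →
        ContDiffOn ℝ (n + 2) f (Set.Icc α β) →
        (∀ r, 2 ≤ r → r ≤ n + 2 → ∀ x ∈ Set.Icc α β,
          |iteratedDerivWithin r f (Set.Icc α β) x| ≤ C r * T / M ^ r) →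
        ((∀ x ∈ Set.Icc α β, 0 ≤ derivWithin f (Set.Icc α β) x) ∨
          (∀ x ∈ Set.Icc α β, derivWithin f (Set.Icc α β) x ≤ 0)) →
        ((∀ x ∈ Set.Icc α β, 0 ≤ iteratedDerivWithin 2 f (Set.Icc α β) x) ∨
          (∀ x ∈ Set.Icc α β, iteratedDerivWithin 2 f (Set.Icc α β) x ≤ 0)) →
        (∀ x ∈ Set.Icc α β, derivWithin f (Set.Icc α β) x ≠ 0) →
        (∀ x ∈ Set.Icc α β, H 1 x =
          1 / (2 * Real.pi * Complex.I * derivWithin f (Set.Icc α β) x)) →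
        (∀ i, 2 ≤ i → i ≤ n → ∀ x ∈ Set.Icc α β, H i x =
          -(derivWithin (H (i - 1)) (Set.Icc α β) x) /
            (2 * Real.pi * Complex.I * derivWithin f (Set.Icc α β) x)) →
        ‖(∫ x in α..β, e (f x)) -
            (e (f β) * ∑ i ∈ Finset.Icc 1 n, H i β -
             e (f α) * ∑ i ∈ Finset.Icc 1 n, H i α)‖ ≤
          K * ∑ j ∈ Finset.Icc 1 n,
            T ^ j /
              ((sInf ((fun x => |derivWithin f (Set.Icc α β) x|) '' Set.Icc α β)) ^ (n + j + 1) *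
                M ^ (n + j)) := by
  classical
  refine ⟨Kconst n C, Kconst_pos n C, ?_⟩
  intro α β M T f H hαβ hM hT hMβα hf hbound hsign1 hsign2 hne hH1 hHrec
  set s : Set ℝ := Set.Icc α β with hs_def
  set z : ℂ := 2 * (Real.pi : ℂ) * Complex.I with hz_def
  have hab : α ≤ β := hαβ.le
  have hus : UniqueDiffOn ℝ s := by rw [hs_def]; exact uniqueDiffOn_Icc hαβ
  have hαs : α ∈ s := by rw [hs_def]; exact Set.left_mem_Icc.2 hab
  have hβs : β ∈ s := by rw [hs_def]; exact Set.right_mem_Icc.2 hab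
  have hsc : IsCompact s := by rw [hs_def]; exact isCompact_Icc
  -- facts about z
  have hπ1 : (1:ℝ) ≤ 2 * Real.pi := by nlinarith [Real.pi_gt_three]
  have hzabs : ‖z‖ = 2 * Real.pi := by
    rw [hz_def]
    simp [abs_of_nonneg Real.pi_pos.le]
  have hzne : z ≠ 0 := by
    intro h
    rw [h, norm_zero] at hzabs
    nlinarith [Real.pi_gt_three]
  have he_eq : ∀ t : ℝ, e t = Complex.exp (z * t) := fun t => by rw [e, hz_def]
  have habse : ∀ t : ℝ, ‖Complex.exp (z * t)‖ = 1 := by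
    intro t
    rw [Complex.norm_exp]
    have h0 : (z * t).re = 0 := by
      rw [hz_def]
      simp [Complex.mul_re]
    rw [h0, Real.exp_zero]
  -- derivative and continuity package
  have hFc : ∀ a : ℕ, a ≤ n + 2 → ContinuousOn (iteratedDerivWithin a f s) s := by
    intro a ha
    exact hf.continuousOn_iteratedDerivWithin (by exact_mod_cast ha) hus
  have hDF1 : ∀ x ∈ s, iteratedDerivWithin 1 f s x = derivWithin f s x := fun x hx => by
    rw [iteratedDerivWithin_one]
  have hDc : ContinuousOn (derivWithin f s) s :=
    (hFc 1 (by omega)).congr (fun x hx => (hDF1 x hx).symm)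
  have hFd : ∀ a : ℕ, a ≤ n + 1 → ∀ x ∈ s, HasDerivWithinAt (iteratedDerivWithin a f s)
      (iteratedDerivWithin (a+1) f s x) s x := by
    intro a ha x hx
    have h1 : DifferentiableOn ℝ (iteratedDerivWithin a f s) s :=
      hf.differentiableOn_iteratedDerivWithin (by exact_mod_cast (by omega : a < n + 2)) hus
    have h2 := (h1 x hx).hasDerivWithinAt
    rwa [← iteratedDerivWithin_succ] at h2
  have hDd : ∀ x ∈ s, HasDerivWithinAt (derivWithin f s)
      (iteratedDerivWithin 2 f s x) s x := by
    intro x hx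
    exact (hFd 1 (by omega) x hx).congr (fun y hy => (hDF1 y hy).symm) ((hDF1 x hx).symm)
  have hfdw : ∀ x ∈ s, HasDerivWithinAt f (derivWithin f s x) s x := by
    intro x hx
    have h1 : DifferentiableOn ℝ f s := hf.differentiableOn (ne_of_gt (by
      exact_mod_cast (by omega : 0 < n + 2)))
    exact (h1 x hx).hasDerivWithinAt
  -- the minimum m
  set m : ℝ := sInf ((fun x => |derivWithin f s x|) '' s) with hm_def
  have himg : IsCompact ((fun x => |derivWithin f s x|) '' s) :=
    hsc.image_of_continuousOn hDc.abs
  have hm_mem : m ∈ ((fun x => |derivWithin f s x|) '' s) :=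
    himg.sInf_mem ⟨_, Set.mem_image_of_mem _ hαs⟩
  have hm0 : 0 < m := by
    obtain ⟨x0, hx0, hx0e⟩ := hm_mem
    rw [← hx0e]
    exact abs_pos.2 (hne x0 hx0)
  have hmle : ∀ x ∈ s, m ≤ |derivWithin f s x| := fun x hx =>
    csInf_le himg.bddBelow ⟨x, hx, rfl⟩
  -- the right-hand side sum
  set R := ∑ j ∈ Finset.Icc 1 n, T ^ j / (m ^ (n + j + 1) * M ^ (n + j)) with hR_def
  have hRj_pos : ∀ j : ℕ, 0 < T ^ j / (m ^ (n + j + 1) * M ^ (n + j)) := fun j =>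
    div_pos (pow_pos hT j) (mul_pos (pow_pos hm0 _) (pow_pos hM _))
  have hR_nonneg : 0 ≤ R := Finset.sum_nonneg fun j _ => (hRj_pos j).le
  have hRj_le : ∀ j, 1 ≤ j → j ≤ n → T ^ j / (m ^ (n + j + 1) * M ^ (n + j)) ≤ R :=
    fun j h1 h2 => Finset.single_le_sum (f := fun j => T ^ j / (m ^ (n + j + 1) * M ^ (n + j)))
      (fun i _ => (hRj_pos i).le) (Finset.mem_Icc.2 ⟨h1, h2⟩)
  -- pointwise bound for a term
  have htval_pt : ∀ t : Tm, (∀ a ∈ t.l, 2 ≤ a ∧ a ≤ n + 2) → ∀ x ∈ s,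
      |tval f s t x| ≤ |t.c| * ((t.l.map C).prod * T ^ t.l.length / M ^ t.l.sum) / m ^ t.p := by
    intro t hent x hx
    have hPabs : |(t.l.map fun a => iteratedDerivWithin a f s x).prod|
        ≤ (t.l.map fun a => C a * T / M ^ a).prod :=
      list_abs_prod_le fun a ha => hbound a (hent a ha).1 (hent a ha).2 x hx
    have hDp : m ^ t.p ≤ |derivWithin f s x| ^ t.p := pow_le_pow_left₀ hm0.le (hmle x hx) _
    have h1 : |tval f s t x| = |t.c| * |(t.l.map fun a => iteratedDerivWithin a f s x).prod|
        / |derivWithin f s x| ^ t.p := by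
      unfold tval
      rw [abs_div, abs_mul, abs_pow]
    rw [h1, ← list_prod_CTM hM.ne' t.l]
    have hnum_nonneg : (0:ℝ) ≤ |t.c| * (t.l.map fun a => C a * T / M ^ a).prod :=
      mul_nonneg (abs_nonneg _) (list_prod_nonneg fun a _ =>
        le_of_lt (div_pos (mul_pos (hCpos a) hT) (pow_pos hM a)))
    exact div_le_div₀ hnum_nonneg (mul_le_mul_of_nonneg_left hPabs (abs_nonneg _))
      (pow_pos hm0 _) hDp
  -- invariants
  have hinvH : ∀ i, 1 ≤ i → ∀ t ∈ Hterms i, Inv i t := inv_Hterms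
  have hentD : ∀ u ∈ dT (Hterms (n+1)), InvD (n+1) u := by
    intro u hu
    rcases List.mem_flatMap.1 hu with ⟨t, ht, hut⟩
    exact invD_of_inv (hinvH (n+1) (by omega) t ht) u hut
  -- the functions G and δ
  set G : ℕ → ℝ → ℂ := fun i x => ((sumT f s (Hterms i) x : ℝ) : ℂ) / z ^ i with hG_def
  set δ : ℕ → ℝ → ℂ := fun i x => ((sumT f s (dT (Hterms i)) x : ℝ) : ℂ) / z ^ i with hδ_def
  have hGd : ∀ i, 1 ≤ i → i ≤ n + 1 → ∀ x ∈ s, HasDerivWithinAt (G i) (δ i x) s x := by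
    intro i h1 h2 x hx
    have hreal : HasDerivWithinAt (sumT f s (Hterms i)) (sumT f s (dT (Hterms i)) x) s x := by
      apply hasDeriv_sumT (hDd x hx) (hne x hx) (Hterms i)
      intro t ht
      have hinv := hinvH i h1 t ht
      refine ⟨by have := hinv.1; omega, fun a ha => hFd a ?_ x hx⟩
      have := (hinv.2.2 a ha).2; omega
    exact hreal.ofReal_comp'.div_const (z ^ i)
  have hGdw : ∀ i, 1 ≤ i → i ≤ n + 1 → ∀ x ∈ s, derivWithin (G i) s x = δ i x :=
    fun i h1 h2 x hx => (hGd i h1 h2 x hx).derivWithin (hus x hx)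
  -- continuity of G and δ
  have hGc : ∀ i, 1 ≤ i → i ≤ n + 1 → ContinuousOn (G i) s := by
    intro i h1 h2
    apply ContinuousOn.div_const
    apply Complex.continuous_ofReal.comp_continuousOn
    apply contOn_sumT hDc hne (Hterms i)
    intro t ht a ha
    apply hFc
    have := ((hinvH i h1 t ht).2.2 a ha).2; omega
  have hδc : ContinuousOn (δ (n+1)) s := by
    apply ContinuousOn.div_const
    apply Complex.continuous_ofReal.comp_continuousOn
    apply contOn_sumT hDc hne (dT (Hterms (n+1)))
    intro t ht a ha
    apply hFc
    have := ((hentD t ht).2.2 a ha).2; omega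
  -- H agrees with G on s
  have hHG : ∀ i, 1 ≤ i → i ≤ n → ∀ x ∈ s, H i x = G i x := by
    intro i hi
    induction i, hi using Nat.le_induction with
    | base =>
      intro _ x hx
      rw [hH1 x hx, hG_def]
      simp only [sumT_Hterms_one, pow_one]
      push_cast
      field_simp
    | succ i hi ih =>
      intro hsn x hx
      have hin : i ≤ n := by omega
      rw [hHrec (i+1) (by omega) hsn x hx]
      have hsimp : (i+1) - 1 = i := by omega
      rw [hsimp]
      have hdw : derivWithin (H i) s x = δ i x := by
        rw [derivWithin_congr (fun y hy => ih hin y hy) (ih hin x hx)]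
        exact hGdw i (by omega) (by omega) x hx
      rw [hdw, hG_def]
      simp only [hδ_def]
      have hstep : sumT f s (Hterms (i+1)) x
          = -(sumT f s (dT (Hterms i)) x / derivWithin f s x) := by
        rw [Hterms_succ (by omega : 1 ≤ i)]; exact sumT_stepT
      rw [hstep]
      push_cast
      have hDne : ((derivWithin f s x : ℝ) : ℂ) ≠ 0 := Complex.ofReal_ne_zero.2 (hne x hx)
      field_simp
      try ring
      try exact Or.inl trivial
  -- telescoping pieces
  have hG1 : ∀ x ∈ s, z * ((derivWithin f s x : ℝ) : ℂ) * G 1 x = 1 := by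
    intro x hx
    rw [hG_def]
    simp only [sumT_Hterms_one, pow_one]
    push_cast
    have hDne : ((derivWithin f s x : ℝ) : ℂ) ≠ 0 := Complex.ofReal_ne_zero.2 (hne x hx)
    field_simp
  have hσstep : ∀ i, 1 ≤ i → ∀ x ∈ s, z * ((derivWithin f s x : ℝ) : ℂ) * G (i+1) x = - δ i x := by
    intro i hi x hx
    rw [hG_def]
    simp only [hδ_def]
    have hstep : sumT f s (Hterms (i+1)) x
        = -(sumT f s (dT (Hterms i)) x / derivWithin f s x) := by
      rw [Hterms_succ hi]; exact sumT_stepT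
    rw [hstep]
    push_cast
    have hDne : ((derivWithin f s x : ℝ) : ℂ) ≠ 0 := Complex.ofReal_ne_zero.2 (hne x hx)
    field_simp
    ring
  have htel : ∀ N : ℕ, 1 ≤ N → ∀ x ∈ s,
      z * ((derivWithin f s x : ℝ) : ℂ) * (∑ i ∈ Finset.Icc 1 N, G i x)
        + ∑ i ∈ Finset.Icc 1 N, δ i x = 1 + δ N x := by
    intro N hN
    induction N, hN using Nat.le_induction with
    | base =>
      intro x hx
      simp only [Finset.Icc_self, Finset.sum_singleton]
      rw [hG1 x hx]
    | succ N hN ih =>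
      intro x hx
      rw [Finset.sum_Icc_succ_top (by omega : 1 ≤ N + 1),
        Finset.sum_Icc_succ_top (by omega : 1 ≤ N + 1)]
      have h1 := hσstep N hN x hx
      have h2 := ih x hx
      linear_combination h2 + h1
  -- derivative of Φ on the interior
  have hΦd : ∀ x ∈ Set.Ioo α β, HasDerivAt
      (fun y => Complex.exp (z * (f y : ℂ)) * ∑ i ∈ Finset.Icc 1 (n+1), G i y)
      (Complex.exp (z * (f x : ℂ)) * (1 + δ (n+1) x)) x := by
    intro x hx
    have hxs : x ∈ s := by rw [hs_def]; exact Set.Ioo_subset_Icc_self hx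
    have hsn : s ∈ nhds x := by rw [hs_def]; exact Icc_mem_nhds hx.1 hx.2
    have hfd : HasDerivAt f (derivWithin f s x) x := (hfdw x hxs).hasDerivAt hsn
    have hfe : HasDerivAt (fun y => Complex.exp (z * (f y : ℂ)))
        (Complex.exp (z * (f x : ℂ)) * (z * ((derivWithin f s x : ℝ) : ℂ))) x := by
      have h1 : HasDerivAt (fun y : ℝ => ((f y : ℝ) : ℂ)) ((derivWithin f s x : ℝ) : ℂ) x :=
        hfd.ofReal_comp
      exact (HasDerivAt.const_mul z h1).cexp
    have hGs : HasDerivAt (fun y => ∑ i ∈ Finset.Icc 1 (n+1), G i y)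
        (∑ i ∈ Finset.Icc 1 (n+1), δ i x) x :=
      HasDerivAt.fun_sum fun i hi => ((hGd i (Finset.mem_Icc.1 hi).1 (Finset.mem_Icc.1 hi).2
        x hxs).hasDerivAt hsn)
    have hmul := hfe.mul hGs
    refine hmul.congr_deriv ?_
    have h3 := htel (n+1) (by omega) x hxs
    rw [← h3]
    ring
  -- continuity of Φ and of the integrand
  have hexpc : ContinuousOn (fun y => Complex.exp (z * (f y : ℂ))) s := by
    have h1 : Continuous (fun w : ℝ => Complex.exp (z * (w : ℂ))) :=
      Complex.continuous_exp.comp (continuous_const.mul Complex.continuous_ofReal)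
    exact h1.comp_continuousOn hf.continuousOn
  have hΦc : ContinuousOn (fun y => Complex.exp (z * (f y : ℂ))
      * ∑ i ∈ Finset.Icc 1 (n+1), G i y) s :=
    hexpc.mul (continuousOn_finset_sum _ fun i hi =>
      hGc i (Finset.mem_Icc.1 hi).1 (Finset.mem_Icc.1 hi).2)
  have hφc : ContinuousOn (fun y => Complex.exp (z * (f y : ℂ)) * (1 + δ (n+1) y)) s :=
    hexpc.mul (continuousOn_const.add hδc)
  have hφint : IntervalIntegrable (fun y => Complex.exp (z * (f y : ℂ)) * (1 + δ (n+1) y))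
      volume α β := by
    apply ContinuousOn.intervalIntegrable
    rw [Set.uIcc_of_le hab]
    exact hs_def ▸ hφc
  -- FTC
  have hFTC : (∫ x in α..β, Complex.exp (z * (f x : ℂ)) * (1 + δ (n+1) x))
      = Complex.exp (z * (f β : ℂ)) * ∑ i ∈ Finset.Icc 1 (n+1), G i β
        - Complex.exp (z * (f α : ℂ)) * ∑ i ∈ Finset.Icc 1 (n+1), G i α := by
    apply intervalIntegral.integral_eq_sub_of_hasDeriv_right_of_le hab (hs_def ▸ hΦc)
      (fun x hx => (hΦd x hx).hasDerivWithinAt) hφint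
  -- split the integral
  have hint_e : IntervalIntegrable (fun x => Complex.exp (z * (f x : ℂ))) volume α β := by
    apply ContinuousOn.intervalIntegrable
    rw [Set.uIcc_of_le hab]
    exact hs_def ▸ hexpc
  have hint_w : IntervalIntegrable (fun x => Complex.exp (z * (f x : ℂ)) * δ (n+1) x)
      volume α β := by
    apply ContinuousOn.intervalIntegrable
    rw [Set.uIcc_of_le hab]
    exact hs_def ▸ (hexpc.mul hδc)
  have hsplit : (∫ x in α..β, Complex.exp (z * (f x : ℂ)) * (1 + δ (n+1) x))
      = (∫ x in α..β, Complex.exp (z * (f x : ℂ)))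
        + ∫ x in α..β, Complex.exp (z * (f x : ℂ)) * δ (n+1) x := by
    rw [← intervalIntegral.integral_add hint_e hint_w]
    apply intervalIntegral.integral_congr
    intro x _
    ring
  rw [hsplit] at hFTC
  rw [Finset.sum_Icc_succ_top (by omega : 1 ≤ n + 1),
    Finset.sum_Icc_succ_top (by omega : 1 ≤ n + 1)] at hFTC
  -- rewrite the goal difference
  have hHβ : ∑ i ∈ Finset.Icc 1 n, H i β = ∑ i ∈ Finset.Icc 1 n, G i β :=
    Finset.sum_congr rfl fun i hi =>
      hHG i (Finset.mem_Icc.1 hi).1 (Finset.mem_Icc.1 hi).2 β hβs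
  have hHα : ∑ i ∈ Finset.Icc 1 n, H i α = ∑ i ∈ Finset.Icc 1 n, G i α :=
    Finset.sum_congr rfl fun i hi =>
      hHG i (Finset.mem_Icc.1 hi).1 (Finset.mem_Icc.1 hi).2 α hαs
  have hIeq : (∫ x in α..β, e (f x)) = ∫ x in α..β, Complex.exp (z * (f x : ℂ)) :=
    intervalIntegral.integral_congr fun x _ => he_eq (f x)
  have hX : (∫ x in α..β, e (f x)) -
      (e (f β) * ∑ i ∈ Finset.Icc 1 n, H i β - e (f α) * ∑ i ∈ Finset.Icc 1 n, H i α)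
      = Complex.exp (z * (f β : ℂ)) * G (n+1) β - Complex.exp (z * (f α : ℂ)) * G (n+1) α
        - ∫ x in α..β, Complex.exp (z * (f x : ℂ)) * δ (n+1) x := by
    rw [hIeq, hHβ, hHα, he_eq (f β), he_eq (f α)]
    linear_combination hFTC
  rw [hX]
  -- bound for |G (n+1) x| on s
  have hGb : ∀ x ∈ s, ‖G (n+1) x‖ ≤ ((Hterms (n+1)).map (kcoef C)).sum * R := by
    intro x hx
    rw [hG_def]
    simp only [norm_div, norm_pow, hzabs, Complex.norm_real, Real.norm_eq_abs]
    have h1 : |sumT f s (Hterms (n+1)) x| ≤ ((Hterms (n+1)).map (kcoef C)).sum * R := by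
      have h2 : |sumT f s (Hterms (n+1)) x|
          ≤ ((Hterms (n+1)).map fun t => kcoef C t * R).sum := by
        apply list_abs_sum_le
        intro t ht
        have hinv := hinvH (n+1) (by omega) t ht
        have hpt := htval_pt t (fun a ha => ⟨(hinv.2.2 a ha).1,
          by have := (hinv.2.2 a ha).2; omega⟩) x hx
        have hSm : t.l.sum = n + t.l.length := by have h3 := hinv.1; have h4 := hinv.2.1; omega
        have hp : t.p = n + t.l.length + 1 := by have h3 := hinv.1; omega
        have hk1 : 1 ≤ t.l.length := hinv.one_le_len (by omega)
        have hkn : t.l.length ≤ n := by have h3 := hinv.len_le; omega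
        refine hpt.trans ?_
        rw [hSm, hp]
        have heq : |t.c| * ((t.l.map C).prod * T ^ t.l.length / M ^ (n + t.l.length))
            / m ^ (n + t.l.length + 1)
            = (|t.c| * (t.l.map C).prod)
              * (T ^ t.l.length / (m ^ (n + t.l.length + 1) * M ^ (n + t.l.length))) := by
          field_simp
        rw [heq]
        have hCle : (t.l.map C).prod ≤ (t.l.map fun a => max (C a) 1).prod :=
          list_prod_le_prod (fun a _ => (hCpos a).le) (fun a _ => le_max_left _ _)
        have hc1 : |t.c| * (t.l.map C).prod ≤ kcoef C t := by
          unfold kcoef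
          have h5 : (0:ℝ) ≤ (t.l.map C).prod := list_prod_nonneg fun a _ => (hCpos a).le
          nlinarith [abs_nonneg t.c]
        exact mul_le_mul hc1 (hRj_le _ hk1 hkn) (hRj_pos _).le (kcoef_nonneg C t)
      refine h2.trans (le_of_eq ?_)
      rw [← List.sum_map_mul_right]
    calc |sumT f s (Hterms (n+1)) x| / (2 * Real.pi) ^ (n+1)
        ≤ |sumT f s (Hterms (n+1)) x| :=
          div_le_self (abs_nonneg _) (one_le_pow₀ hπ1)
      _ ≤ _ := h1
  -- integral bound for each term of the derivative
  have hcore : ∀ q : ℕ, (∫ x in α..β, |iteratedDerivWithin 2 f s x| /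
      |derivWithin f s x| ^ (q+2)) ≤ 2 * (1/m) ^ (q+1) := by
    intro q
    exact core_integral α β m hαβ f hm0 hmle hne hDc (hFc 2 (by omega)) hDd hsign1 hsign2 q
  -- continuity of each tval for terms of the derivative
  have htc : ∀ u ∈ dT (Hterms (n+1)), ContinuousOn (tval f s u) s := by
    intro u hu
    apply contOn_tval _ hDc hne
    intro a ha
    apply hFc
    have := ((hentD u hu).2.2 a ha).2; omega
  -- per-term integral bound
  have hterm_int : ∀ u ∈ dT (Hterms (n+1)),
      (∫ x in α..β, |tval f s u x|) ≤ kcoef C u * R := by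
    intro u hu
    have hinv := hentD u hu
    have hent2 : ∀ a ∈ u.l, 2 ≤ a ∧ a ≤ n + 2 := fun a ha =>
      ⟨(hinv.2.2 a ha).1, by have := (hinv.2.2 a ha).2; omega⟩
    have hint_u : IntervalIntegrable (fun x => |tval f s u x|) volume α β := by
      apply ContinuousOn.intervalIntegrable
      rw [Set.uIcc_of_le hab]
      exact hs_def ▸ (htc u hu).abs
    by_cases h2 : 2 ∈ u.l
    · -- the term contains an f'' factor : integrate it exactly
      obtain ⟨j, hj⟩ : ∃ j, u.l.length = j + 1 :=
        ⟨u.l.length - 1, by have := List.length_pos_iff.2 (List.ne_nil_of_mem h2); omega⟩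
      have hk2 : 2 ≤ u.l.length := by
        by_contra hcon
        push_neg at hcon
        have h1 : u.l.length = 1 := by
          have := List.length_pos_iff.2 (List.ne_nil_of_mem h2); omega
        obtain ⟨a, ha⟩ := List.length_eq_one_iff.1 h1
        rw [ha] at h2
        have ha2 : a = 2 := (List.mem_singleton.1 h2).symm
        have hp := hinv.1
        have hsm := hinv.2.1
        rw [ha, ha2] at hp hsm
        simp at hp hsm
        omega
      have hj1 : 1 ≤ j := by omega
      have hjn : j ≤ n := by
        have h3 := two_mul_len_le_sum u.l (fun a ha => (hinv.2.2 a ha).1)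
        have hp := hinv.1
        have hsm := hinv.2.1
        omega
      have hlen' : (u.l.erase 2).length + 1 = u.l.length := List.length_erase_add_one h2
      have hsum' : 2 + (u.l.erase 2).sum = u.l.sum := by
        simpa using List.sum_map_erase (fun a : ℕ => a) h2
      have hl'len : (u.l.erase 2).length = j := by omega
      have hl'sum : (u.l.erase 2).sum = n + j := by
        have hp := hinv.1
        have hsm := hinv.2.1
        omega
      have hp2 : u.p = (n + j) + 2 := by have hp := hinv.1; omega
      set B := |u.c| * (((u.l.erase 2).map C).prod * T ^ j / M ^ (n+j)) with hB_def
      have hprodC_nonneg : (0:ℝ) ≤ ((u.l.erase 2).map C).prod :=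
        list_prod_nonneg fun a _ => (hCpos a).le
      have hB_nonneg : 0 ≤ B := by
        rw [hB_def]
        exact mul_nonneg (abs_nonneg _) (div_nonneg
          (mul_nonneg hprodC_nonneg (pow_pos hT j).le) (pow_pos hM _).le)
      have hpw : ∀ x ∈ s, |tval f s u x|
          ≤ B * (|iteratedDerivWithin 2 f s x| / |derivWithin f s x| ^ u.p) := by
        intro x hx
        have e1 : |tval f s u x| = |u.c|
            * ((u.l.map fun a => |iteratedDerivWithin a f s x|).prod)
            / |derivWithin f s x| ^ u.p := by
          unfold tval
          rw [abs_div, abs_mul, abs_pow, list_abs_prod]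
        have e2 : (u.l.map fun a => |iteratedDerivWithin a f s x|).prod
            = |iteratedDerivWithin 2 f s x|
              * (((u.l.erase 2).map fun a => |iteratedDerivWithin a f s x|).prod) :=
          (List.prod_map_erase (fun a => |iteratedDerivWithin a f s x|) h2).symm
        have e3 : (((u.l.erase 2).map fun a => |iteratedDerivWithin a f s x|).prod)
            ≤ ((u.l.erase 2).map C).prod * T ^ j / M ^ (n+j) := by
          rw [← hl'sum, ← hl'len, ← list_prod_CTM hM.ne', ← list_abs_prod]
          apply list_abs_prod_le
          intro a ha
          have hai := hent2 a (List.mem_of_mem_erase ha)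
          exact hbound a hai.1 hai.2 x hx
        rw [e1, e2, hB_def]
        have hDpow_pos : 0 < |derivWithin f s x| ^ u.p := pow_pos (abs_pos.2 (hne x hx)) _
        have hstep1 : |u.c| * (|iteratedDerivWithin 2 f s x|
              * ((u.l.erase 2).map fun a => |iteratedDerivWithin a f s x|).prod)
            / |derivWithin f s x| ^ u.p
            ≤ |u.c| * (|iteratedDerivWithin 2 f s x|
              * (((u.l.erase 2).map C).prod * T ^ j / M ^ (n+j)))
            / |derivWithin f s x| ^ u.p := by
          gcongr
        refine hstep1.trans (le_of_eq ?_)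
        field_simp
      have hFD_int : IntervalIntegrable
          (fun x => |iteratedDerivWithin 2 f s x| / |derivWithin f s x| ^ u.p) volume α β := by
        apply ContinuousOn.intervalIntegrable
        rw [Set.uIcc_of_le hab]
        exact hs_def ▸ (((hFc 2 (by omega)).abs).div ((hDc.abs).pow u.p)
          (fun x hx => pow_ne_zero _ (abs_ne_zero.2 (hne x hx))))
      calc (∫ x in α..β, |tval f s u x|)
          ≤ ∫ x in α..β, B * (|iteratedDerivWithin 2 f s x| / |derivWithin f s x| ^ u.p) :=
            intervalIntegral.integral_mono_on hab hint_u (hFD_int.const_mul B)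
              (fun x hx => hpw x (hs_def ▸ hx))
        _ = B * ∫ x in α..β, |iteratedDerivWithin 2 f s x| / |derivWithin f s x| ^ u.p :=
            intervalIntegral.integral_const_mul _ _
        _ ≤ B * (2 * (1/m) ^ (n+j+1)) := by
            apply mul_le_mul_of_nonneg_left _ hB_nonneg
            have hq := hcore (n+j)
            rw [hp2]
            exact hq
        _ = (2 * |u.c| * ((u.l.erase 2).map C).prod)
              * (T ^ j / (m ^ (n+j+1) * M ^ (n+j))) := by
            rw [hB_def]
            rw [div_pow, one_pow]
            field_simp
        _ ≤ kcoef C u * R := by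
            apply mul_le_mul _ (hRj_le j hj1 hjn) (hRj_pos j).le (kcoef_nonneg C u)
            unfold kcoef
            have hC1 : ((u.l.erase 2).map C).prod
                ≤ ((u.l.erase 2).map fun a => max (C a) 1).prod :=
              list_prod_le_prod (fun a _ => (hCpos a).le) (fun a _ => le_max_left _ _)
            have hC2 : ((u.l.erase 2).map fun a => max (C a) 1).prod
                ≤ (u.l.map fun a => max (C a) 1).prod := by
              rw [← List.prod_map_erase (fun a => max (C a) 1) h2]
              exact le_mul_of_one_le_left
                (list_prod_nonneg fun a _ => le_trans zero_le_one (le_max_right _ _))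
                (le_max_right _ _)
            have h0 : (0:ℝ) ≤ ((u.l.erase 2).map fun a => max (C a) 1).prod :=
              list_prod_nonneg fun a _ => le_trans zero_le_one (le_max_right _ _)
            nlinarith [abs_nonneg u.c]
    · -- no f'' factor : use the trivial bound
      have hsum : u.l.sum = n + 1 + u.l.length := by
        have h3 := hinv.1
        have h4 := hinv.2.1
        omega
      have hk1 : 1 ≤ u.l.length := by
        rcases Nat.eq_zero_or_pos u.l.length with h0 | h
        · exfalso
          have hnil : u.l = [] := List.length_eq_zero_iff.1 h0
          rw [hnil] at hsum
          simp at hsum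
        · exact h
      have hkn : u.l.length ≤ n := by
        have h3 := three_mul_len_le_sum u.l (fun a ha => by
          have h2a := (hinv.2.2 a ha).1
          have hne2 : a ≠ 2 := fun he => h2 (he ▸ ha)
          omega)
        omega
      have hpt := htval_pt u hent2
      obtain ⟨cst, hcst_def⟩ : ∃ c : ℝ,
          c = |u.c| * ((u.l.map C).prod * T ^ u.l.length / M ^ u.l.sum) / m ^ u.p := ⟨_, rfl⟩
      have hprodC_nonneg : (0:ℝ) ≤ (u.l.map C).prod :=
        list_prod_nonneg fun a _ => (hCpos a).le
      have hcst_nonneg : 0 ≤ cst := by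
        rw [hcst_def]
        exact div_nonneg (mul_nonneg (abs_nonneg _) (div_nonneg
          (mul_nonneg hprodC_nonneg (pow_pos hT _).le) (pow_pos hM _).le)) (pow_pos hm0 _).le
      have hplen : u.p = n + 1 + u.l.length := hinv.1
      calc (∫ x in α..β, |tval f s u x|) ≤ ∫ _x in α..β, cst :=
            intervalIntegral.integral_mono_on hab hint_u intervalIntegrable_const
              (fun x hx => by rw [hcst_def]; exact hpt x (hs_def ▸ hx))
        _ = (β - α) * cst := by rw [intervalIntegral.integral_const, smul_eq_mul]
        _ ≤ M * cst := mul_le_mul_of_nonneg_right (by linarith) hcst_nonneg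
        _ = (|u.c| * (u.l.map C).prod)
              * (T ^ u.l.length / (m ^ (n + u.l.length + 1) * M ^ (n + u.l.length))) := by
            rw [hcst_def, hsum, hplen]
            rw [show n + 1 + u.l.length = (n + u.l.length) + 1 by omega]
            rw [pow_succ, pow_succ]
            field_simp
        _ ≤ kcoef C u * R := by
            apply mul_le_mul _ (hRj_le _ hk1 hkn) (hRj_pos _).le (kcoef_nonneg C u)
            unfold kcoef
            have hC1 : (u.l.map C).prod ≤ (u.l.map fun a => max (C a) 1).prod :=
              list_prod_le_prod (fun a _ => (hCpos a).le) (fun a _ => le_max_left _ _)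
            nlinarith [abs_nonneg u.c, hprodC_nonneg]
  -- list-level integral bound
  have hLsum : ∀ L : List Tm, (∀ u ∈ L, u ∈ dT (Hterms (n+1))) →
      (∫ x in α..β, |sumT f s L x|) ≤ ((L.map (kcoef C)).sum) * R := by
    intro L
    induction L with
    | nil => intro _; simp
    | cons u L ih =>
      intro hmem
      have hu := hmem u (by simp)
      have hint_u : IntervalIntegrable (fun x => |tval f s u x|) volume α β := by
        apply ContinuousOn.intervalIntegrable
        rw [Set.uIcc_of_le hab]
        exact hs_def ▸ (htc u hu).abs
      have hcontL : ContinuousOn (sumT f s L) s := by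
        apply contOn_sumT hDc hne L
        intro t ht a ha
        apply hFc
        have := ((hentD t (hmem t (by simp [ht]))).2.2 a ha).2; omega
      have hint_L : IntervalIntegrable (fun x => |sumT f s L x|) volume α β := by
        apply ContinuousOn.intervalIntegrable
        rw [Set.uIcc_of_le hab]
        exact hs_def ▸ hcontL.abs
      have hint_uL : IntervalIntegrable (fun x => |sumT f s (u :: L) x|) volume α β := by
        apply ContinuousOn.intervalIntegrable
        rw [Set.uIcc_of_le hab]
        refine hs_def ▸ (ContinuousOn.abs ?_)
        apply contOn_sumT hDc hne (u :: L)
        intro t ht a ha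
        apply hFc
        have := ((hentD t (hmem t ht)).2.2 a ha).2; omega
      calc (∫ x in α..β, |sumT f s (u :: L) x|)
          ≤ ∫ x in α..β, (|tval f s u x| + |sumT f s L x|) := by
            apply intervalIntegral.integral_mono_on hab hint_uL (hint_u.add hint_L)
            intro x _
            rw [sumT_cons]
            exact abs_add_le _ _
        _ = (∫ x in α..β, |tval f s u x|) + ∫ x in α..β, |sumT f s L x| :=
            intervalIntegral.integral_add hint_u hint_L
        _ ≤ kcoef C u * R + ((L.map (kcoef C)).sum) * R :=
            add_le_add (hterm_int u hu) (ih (fun t ht => hmem t (by simp [ht])))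
        _ = (((u :: L).map (kcoef C)).sum) * R := by simp [add_mul]
  -- bound for the remaining integral
  have hint_sumTd : IntervalIntegrable (fun x => |sumT f s (dT (Hterms (n+1))) x|)
      volume α β := by
    apply ContinuousOn.intervalIntegrable
    rw [Set.uIcc_of_le hab]
    refine hs_def ▸ (ContinuousOn.abs ?_)
    apply contOn_sumT hDc hne
    intro t ht a ha
    apply hFc
    have := ((hentD t ht).2.2 a ha).2; omega
  have hWb : ‖∫ x in α..β, Complex.exp (z * (f x : ℂ)) * δ (n+1) x‖
      ≤ ((dT (Hterms (n+1))).map (kcoef C)).sum * R := by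
    refine (intervalIntegral.norm_integral_le_integral_norm hab).trans ?_
    have hintnorm : IntervalIntegrable
        (fun x => ‖Complex.exp (z * (f x : ℂ)) * δ (n+1) x‖) volume α β := hint_w.norm
    calc (∫ x in α..β, ‖Complex.exp (z * (f x : ℂ)) * δ (n+1) x‖)
        ≤ ∫ x in α..β, |sumT f s (dT (Hterms (n+1))) x| := by
          apply intervalIntegral.integral_mono_on hab hintnorm hint_sumTd
          intro x hx
          rw [norm_mul, habse (f x), one_mul]
          simp only [hδ_def]
          rw [norm_div, norm_pow, hzabs, Complex.norm_real, Real.norm_eq_abs]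
          exact div_le_self (abs_nonneg _) (one_le_pow₀ hπ1)
      _ ≤ _ := hLsum (dT (Hterms (n+1))) (fun u hu => hu)
  -- final assembly
  have hAβ : ‖Complex.exp (z * (f β : ℂ)) * G (n+1) β‖
      ≤ ((Hterms (n+1)).map (kcoef C)).sum * R := by
    rw [norm_mul, habse (f β), one_mul]
    exact hGb β hβs
  have hAα : ‖Complex.exp (z * (f α : ℂ)) * G (n+1) α‖
      ≤ ((Hterms (n+1)).map (kcoef C)).sum * R := by
    rw [norm_mul, habse (f α), one_mul]
    exact hGb α hαs
  have htri : ‖Complex.exp (z * (f β : ℂ)) * G (n+1) β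
        - Complex.exp (z * (f α : ℂ)) * G (n+1) α
        - ∫ x in α..β, Complex.exp (z * (f x : ℂ)) * δ (n+1) x‖
      ≤ ‖Complex.exp (z * (f β : ℂ)) * G (n+1) β‖
        + ‖Complex.exp (z * (f α : ℂ)) * G (n+1) α‖
        + ‖∫ x in α..β, Complex.exp (z * (f x : ℂ)) * δ (n+1) x‖ := by
    calc ‖_ - _ - _‖ ≤ ‖_ - _‖ + ‖_‖ := norm_sub_le _ _
      _ ≤ _ := by
        have := norm_sub_le (Complex.exp (z * (f β : ℂ)) * G (n+1) β)
          (Complex.exp (z * (f α : ℂ)) * G (n+1) α)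
        linarith
  refine htri.trans ?_
  have hKsum : ((Hterms (n+1)).map (kcoef C)).sum * R
      + ((Hterms (n+1)).map (kcoef C)).sum * R
      + ((dT (Hterms (n+1))).map (kcoef C)).sum * R ≤ Kconst n C * R := by
    unfold Kconst
    have h1 := kcoef_sum_nonneg C (dT (Hterms (n+1)))
    have h2 := kcoef_sum_nonneg C (Hterms (n+1))
    nlinarith [hR_nonneg]
  calc _ ≤ ((Hterms (n+1)).map (kcoef C)).sum * R
        + ((Hterms (n+1)).map (kcoef C)).sum * R
        + ((dT (Hterms (n+1))).map (kcoef C)).sum * R := by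
        have := hWb
        linarith [hAβ, hAα, hWb]
    _ ≤ Kconst n C * R := hKsum
end

section
/- Under the setup below, if T^{1/(2n+3)} Δ > 1, then r = min(r_1, r_2, Δ M) satisfies r ≥ min( (γ−α)/C_2, (β−γ)/C_2, M·T^{−1/(2n+3)} ). -/
open Set in

lemma aux_quad (α β γ : ℝ) (hαγ : α < γ) (hγβ : γ < β) (f : ℝ → ℝ) (c : ℝ) (hc : 0 ≤ c)
    (hf : ContDiffOn ℝ 2 f (Set.Icc α β))
    (hf'γ : derivWithin f (Set.Icc α β) γ = 0)
    (hf'' : ∀ x ∈ Set.Icc α β, c ≤ iteratedDerivWithin 2 f (Set.Icc α β) x) :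
    f γ + c / 2 * (α - γ) ^ 2 ≤ f α ∧ f γ + c / 2 * (β - γ) ^ 2 ≤ f β := by
  have hαβ : α < β := hαγ.trans hγβ
  set s := Set.Icc α β with hsdef
  have hs : UniqueDiffOn ℝ s := uniqueDiffOn_Icc hαβ
  have hγs : γ ∈ s := ⟨hαγ.le, hγβ.le⟩
  set f1 : ℝ → ℝ := derivWithin f s with hf1def
  have hf1d : ContDiffOn ℝ 1 f1 s := hf.derivWithin hs (by norm_num)
  -- f has derivative f1 x at interior points
  have hfda : ∀ x ∈ Set.Ioo α β, HasDerivAt f (f1 x) x := by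
    intro x hx
    have hmem : s ∈ nhds x := Icc_mem_nhds hx.1 hx.2
    exact ((hf.differentiableOn (by norm_num) x (Ioo_subset_Icc_self hx)).hasDerivWithinAt).hasDerivAt hmem
  -- f1 has derivative iteratedDerivWithin 2 at interior points
  have hf1da : ∀ x ∈ Set.Ioo α β, HasDerivAt f1 (iteratedDerivWithin 2 f s x) x := by
    intro x hx
    have hxs : x ∈ s := Ioo_subset_Icc_self hx
    have hmem : s ∈ nhds x := Icc_mem_nhds hx.1 hx.2
    have h1 : DifferentiableWithinAt ℝ f1 s x :=
      (hf1d.differentiableOn one_ne_zero) x hxs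
    have h2 := h1.hasDerivWithinAt.hasDerivAt hmem
    have h3 : derivWithin f1 s x = iteratedDerivWithin 2 f s x := by
      rw [iteratedDerivWithin_succ]
      apply Filter.EventuallyEq.derivWithin_eq
      · filter_upwards [self_mem_nhdsWithin] with y hy
        rw [hf1def, iteratedDerivWithin_one]
      · rw [hf1def, iteratedDerivWithin_one]
    rwa [h3] at h2
  set φ : ℝ → ℝ := fun x => f1 x - c * (x - γ) with hφdef
  have hφda : ∀ x ∈ Set.Ioo α β, HasDerivAt φ (iteratedDerivWithin 2 f s x - c) x := by
    intro x hx
    have h2 : HasDerivAt (fun x => c * (x - γ)) c x := by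
      simpa using (((hasDerivAt_id x).sub_const γ).const_mul c)
    exact (hf1da x hx).sub h2
  have hφmono : MonotoneOn φ s := by
    apply monotoneOn_of_deriv_nonneg (convex_Icc α β)
    · exact (hf1d.continuousOn).sub (by fun_prop)
    · rw [interior_Icc]
      intro x hx
      exact ((hφda x hx).differentiableAt).differentiableWithinAt
    · rw [interior_Icc]
      intro x hx
      rw [(hφda x hx).deriv]
      have := hf'' x (Ioo_subset_Icc_self hx)
      linarith
  have hφγ : φ γ = 0 := by simp only [hφdef, sub_self, mul_zero, sub_zero]; exact hf'γ
  set g : ℝ → ℝ := fun x => f x - c / 2 * (x - γ) ^ 2 with hgdef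
  have hgda : ∀ x ∈ Set.Ioo α β, HasDerivAt g (φ x) x := by
    intro x hx
    have h2 : HasDerivAt (fun x => c / 2 * (x - γ) ^ 2) (c * (x - γ)) x := by
      have := (((hasDerivAt_id x).sub_const γ).pow 2).const_mul (c / 2)
      exact this.congr_deriv (by simp only [id_eq]; ring)
    exact (hfda x hx).sub h2
  have hgc : ContinuousOn g s := (hf.continuousOn).sub (by fun_prop)
  constructor
  · -- g antitone on Icc α γ
    have hanti : AntitoneOn g (Set.Icc α γ) := by
      apply antitoneOn_of_deriv_nonpos (convex_Icc α γ)
      · exact hgc.mono (Icc_subset_Icc le_rfl hγβ.le)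
      · rw [interior_Icc]
        intro x hx
        have hx' : x ∈ Set.Ioo α β := ⟨hx.1, hx.2.trans hγβ⟩
        exact ((hgda x hx').differentiableAt).differentiableWithinAt
      · rw [interior_Icc]
        intro x hx
        have hx' : x ∈ Set.Ioo α β := ⟨hx.1, hx.2.trans hγβ⟩
        rw [(hgda x hx').deriv]
        have : φ x ≤ φ γ := hφmono ⟨hx.1.le, (hx.2.trans hγβ).le⟩ hγs hx.2.le
        linarith [hφγ ▸ this]
    have := hanti ⟨le_rfl, hαγ.le⟩ ⟨hαγ.le, le_rfl⟩ hαγ.le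
    simp only [hgdef, sub_self, ne_eq, OfNat.ofNat_ne_zero, not_false_eq_true, zero_pow,
      mul_zero, sub_zero] at this
    linarith
  · have hmono : MonotoneOn g (Set.Icc γ β) := by
      apply monotoneOn_of_deriv_nonneg (convex_Icc γ β)
      · exact hgc.mono (Icc_subset_Icc hαγ.le le_rfl)
      · rw [interior_Icc]
        intro x hx
        have hx' : x ∈ Set.Ioo α β := ⟨hαγ.trans hx.1, hx.2⟩
        exact ((hgda x hx').differentiableAt).differentiableWithinAt
      · rw [interior_Icc]
        intro x hx
        have hx' : x ∈ Set.Ioo α β := ⟨hαγ.trans hx.1, hx.2⟩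
        rw [(hgda x hx').deriv]
        have : φ γ ≤ φ x := hφmono hγs ⟨(hαγ.trans hx.1).le, hx.2.le⟩ hx.1.le
        linarith [hφγ ▸ this]
    have := hmono ⟨le_rfl, hγβ.le⟩ ⟨hγβ.le, le_rfl⟩ hγβ.le
    simp only [hgdef, sub_self, ne_eq, OfNat.ofNat_ne_zero, not_false_eq_true, zero_pow,
      mul_zero, sub_zero] at this
    linarith

/-- Under the phase setup, if `T^{1/(2n+3)} Δ > 1`, then
`r = min(r₁, r₂, ΔM)` satisfies `r ≥ min((γ−α)/C₂, (β−γ)/C₂, M T^{−1/(2n+3)})`. -/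
theorem weighted_stationary_phase_stmt4
    (n : ℕ) (hn : 2 ≤ n) (C : ℕ → ℝ) (hC : ∀ k, 0 < C k)
    (α β γ M T r1 r2 : ℝ) (f : ℝ → ℝ)
    (hαγ : α < γ) (hγβ : γ < β) (hM : 0 < M) (hT : 0 < T) (hβα : β - α ≤ M)
    (hf : ContDiffOn ℝ (2 * n + 3) f (Set.Icc α β))
    (hf'γ : derivWithin f (Set.Icc α β) γ = 0)
    (hDer : ∀ r, 2 ≤ r → r ≤ 2 * n + 3 → ∀ x ∈ Set.Icc α β,
      |iteratedDerivWithin r f (Set.Icc α β) x| ≤ C r * T / M ^ r)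
    (hf'' : ∀ x ∈ Set.Icc α β, T / (C 2 * M ^ 2) ≤ iteratedDerivWithin 2 f (Set.Icc α β) x)
    (hr1 : 0 < r1) (hr2 : 0 < r2)
    (hfα : f α = f γ + (iteratedDerivWithin 2 f (Set.Icc α β) γ / 2) * r1 ^ 2)
    (hfβ : f β = f γ + (iteratedDerivWithin 2 f (Set.Icc α β) γ / 2) * r2 ^ 2)
    (hbig : T ^ ((1 : ℝ) / (2 * (n : ℝ) + 3)) *
        (min (Real.log 2 / C 2)
          (1 / ((C 2) ^ 2 *
            (Finset.Icc 2 (2 * n + 3)).sup' (Finset.nonempty_Icc.mpr (by omega)) C))) > 1) :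
    min ((γ - α) / C 2) (min ((β - γ) / C 2) (M * T ^ (-(1 : ℝ) / (2 * (n : ℝ) + 3)))) ≤
      min r1 (min r2
        ((min (Real.log 2 / C 2)
          (1 / ((C 2) ^ 2 *
            (Finset.Icc 2 (2 * n + 3)).sup' (Finset.nonempty_Icc.mpr (by omega)) C))) * M)) := by
  have hC2 : 0 < C 2 := hC 2
  have hc : 0 < T / (C 2 * M ^ 2) := by positivity
  have hf2 : ContDiffOn ℝ 2 f (Set.Icc α β) := hf.of_le (by exact_mod_cast (by omega : 2 ≤ 2 * n + 3))
  obtain ⟨hA, hB⟩ := aux_quad α β γ hαγ hγβ f (T / (C 2 * M ^ 2)) hc.le hf2 hf'γ hf''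
  set D2γ := iteratedDerivWithin 2 f (Set.Icc α β) γ with hD2def
  have hD2ub : D2γ ≤ C 2 * T / M ^ 2 :=
    (abs_le.mp (hDer 2 le_rfl (by omega) γ ⟨hαγ.le, hγβ.le⟩)).2
  have key1 : (γ - α) / C 2 ≤ r1 := by
    rw [div_le_iff₀ hC2]
    have h1 : T / (C 2 * M ^ 2) / 2 * (α - γ) ^ 2 ≤ D2γ / 2 * r1 ^ 2 := by linarith [hfα]
    have h2 : D2γ / 2 * r1 ^ 2 ≤ (C 2 * T / M ^ 2) / 2 * r1 ^ 2 := by nlinarith [sq_nonneg r1]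
    have hq : (γ - α) ^ 2 ≤ (r1 * C 2) ^ 2 := by
      have h := mul_le_mul_of_nonneg_left (h1.trans h2)
        (le_of_lt (show (0:ℝ) < 2 * M ^ 2 * C 2 / T by positivity))
      calc (γ - α) ^ 2 = 2 * M ^ 2 * C 2 / T * (T / (C 2 * M ^ 2) / 2 * (α - γ) ^ 2) := by
            field_simp; ring
        _ ≤ 2 * M ^ 2 * C 2 / T * (C 2 * T / M ^ 2 / 2 * r1 ^ 2) := h
        _ = (r1 * C 2) ^ 2 := by field_simp
    exact (pow_le_pow_iff_left₀ (by linarith) (by positivity) two_ne_zero).mp hq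
  have key2 : (β - γ) / C 2 ≤ r2 := by
    rw [div_le_iff₀ hC2]
    have h1 : T / (C 2 * M ^ 2) / 2 * (β - γ) ^ 2 ≤ D2γ / 2 * r2 ^ 2 := by linarith [hfβ]
    have h2 : D2γ / 2 * r2 ^ 2 ≤ (C 2 * T / M ^ 2) / 2 * r2 ^ 2 := by nlinarith [sq_nonneg r2]
    have hq : (β - γ) ^ 2 ≤ (r2 * C 2) ^ 2 := by
      have h := mul_le_mul_of_nonneg_left (h1.trans h2)
        (le_of_lt (show (0:ℝ) < 2 * M ^ 2 * C 2 / T by positivity))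
      calc (β - γ) ^ 2 = 2 * M ^ 2 * C 2 / T * (T / (C 2 * M ^ 2) / 2 * (β - γ) ^ 2) := by
            field_simp
        _ ≤ 2 * M ^ 2 * C 2 / T * (C 2 * T / M ^ 2 / 2 * r2 ^ 2) := h
        _ = (r2 * C 2) ^ 2 := by field_simp
    exact (pow_le_pow_iff_left₀ (by linarith) (by positivity) two_ne_zero).mp hq
  have ht : (0 : ℝ) < T ^ ((1 : ℝ) / (2 * (n : ℝ) + 3)) := Real.rpow_pos_of_pos hT _
  have key3lem : ∀ Δ : ℝ, 1 < T ^ ((1 : ℝ) / (2 * (n : ℝ) + 3)) * Δ →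
      M * T ^ (-(1 : ℝ) / (2 * (n : ℝ) + 3)) ≤ Δ * M := by
    intro Δ h
    have hrw : T ^ (-(1 : ℝ) / (2 * (n : ℝ) + 3)) = (T ^ ((1 : ℝ) / (2 * (n : ℝ) + 3)))⁻¹ := by
      rw [neg_div, Real.rpow_neg hT.le]
    have hΔ : (T ^ ((1 : ℝ) / (2 * (n : ℝ) + 3)))⁻¹ ≤ Δ := by
      rw [inv_eq_one_div, div_le_iff₀ ht, mul_comm]
      exact h.le
    rw [hrw, mul_comm]
    exact mul_le_mul_of_nonneg_right hΔ hM.le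
  have key3 := key3lem _ hbig
  exact le_min ((min_le_left _ _).trans key1)
    (le_min ((min_le_right _ _).trans ((min_le_left _ _).trans key2))
      ((min_le_right _ _).trans ((min_le_right _ _).trans key3)))
end

section
/- Let λ be a nonzero real number, r > 0, and j ≥ 1 an integer. For 1 ≤ t ≤ j define φ_t(y) = (−1)^{t−1} · [ (2j−1)(2j−3)···(2j−(2t−3)) ] / (4π λ i)^t · y^{2j−(2t−1)}, where the product in brackets is empty (equal to 1) when t = 1. Then ∫_{−r}^{r} e(λ y²) y^{2j} dy = [ e(λ y²) Σ_{t=1}^{j} φ_t(y) ]_{−r}^{r} + ( (−1)^j (2j−1)!! / (4π i λ)^j ) ∫_{−r}^{r} e(λ y²) dy. -/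
lemma e_cont_mul_pow (lam : ℝ) (n : ℕ) : Continuous fun y : ℝ => e (lam * y^2) * (y:ℂ)^n := by
  simp only [e]
  fun_prop

lemma ibp (lam r : ℝ) (k : ℕ) :
    (4*(Real.pi:ℂ)*Complex.I*lam) * (∫ y in (-r)..r, e (lam*y^2) * (y:ℂ)^(2*k+2))
      + (2*k+1) * ∫ y in (-r)..r, e (lam*y^2)*(y:ℂ)^(2*k)
    = e (lam*r^2) * (r:ℂ)^(2*k+1) - e (lam*(-r)^2) * ((-r:ℝ):ℂ)^(2*k+1) := by
  have hF : ∀ y : ℝ, HasDerivAt (fun y : ℝ => e (lam*y^2) * (y:ℂ)^(2*k+1))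
      ((4*(Real.pi:ℂ)*Complex.I*lam) * (e (lam*y^2) * (y:ℂ)^(2*k+2))
        + (2*k+1) * (e (lam*y^2)*(y:ℂ)^(2*k))) y := by
    intro y
    have he : ∀ z : ℝ, e (lam * z^2) = Complex.exp ((2*(Real.pi:ℂ)*Complex.I*lam) * (z:ℂ)^2) := by
      intro z; simp only [e]; congr 1; push_cast; ring
    simp only [he]
    have h2 : HasDerivAt (fun z : ℂ => Complex.exp ((2*(Real.pi:ℂ)*Complex.I*lam)*z^2) * z^(2*k+1))
        (Complex.exp ((2*(Real.pi:ℂ)*Complex.I*lam)*(y:ℂ)^2) * ((2*(Real.pi:ℂ)*Complex.I*lam) * ((2:ℕ) * (y:ℂ)^(2-1)))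
            * (y:ℂ)^(2*k+1)
          + Complex.exp ((2*(Real.pi:ℂ)*Complex.I*lam)*(y:ℂ)^2) * (((2*k+1:ℕ):ℂ) * (y:ℂ)^(2*k+1-1))) (y:ℂ) :=
      (((hasDerivAt_pow 2 (y:ℂ)).const_mul ((2*(Real.pi:ℂ)*Complex.I*lam))).cexp).mul
        (hasDerivAt_pow (2*k+1) (y:ℂ))
    convert h2.comp_ofReal using 1
    push_cast
    ring
  have hint : IntervalIntegrable (fun y : ℝ =>
      (4*(Real.pi:ℂ)*Complex.I*lam) * (e (lam*y^2) * (y:ℂ)^(2*k+2))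
        + (2*k+1) * (e (lam*y^2)*(y:ℂ)^(2*k))) MeasureTheory.volume (-r) r :=
    ((continuous_const.mul (e_cont_mul_pow lam (2*k+2))).add
      (continuous_const.mul (e_cont_mul_pow lam (2*k)))).intervalIntegrable _ _
  have h := intervalIntegral.integral_eq_sub_of_hasDerivAt (fun y _ => hF y) hint
  rw [intervalIntegral.integral_add
        (f := fun y : ℝ => (4*(Real.pi:ℂ)*Complex.I*lam) * (e (lam*y^2) * (y:ℂ)^(2*k+2)))
        (g := fun y : ℝ => (2*(k:ℂ)+1) * (e (lam*y^2)*(y:ℂ)^(2*k)))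
        ((continuous_const.mul (e_cont_mul_pow lam (2*k+2))).intervalIntegrable _ _)
        ((continuous_const.mul (e_cont_mul_pow lam (2*k))).intervalIntegrable _ _),
      intervalIntegral.integral_const_mul, intervalIntegral.integral_const_mul] at h
  exact h

lemma dbl_step (n : ℕ) : (Nat.doubleFactorial (2*(n+1)-1) : ℂ)
    = (2*n+1) * (Nat.doubleFactorial (2*n-1) : ℂ) := by
  cases n with
  | zero => norm_num [Nat.doubleFactorial]
  | succ k =>
    rw [show 2*(k+1+1)-1 = (2*k+1)+2 from by omega, Nat.doubleFactorial_add_two,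
      show 2*(k+1)-1 = 2*k+1 from by omega]
    push_cast; ring

lemma key (lam r : ℝ) (hlam : lam ≠ 0) : ∀ n : ℕ,
    (∫ y in (-r)..r, e (lam*y^2) * (y:ℂ)^(2*n)) =
    (∑ t ∈ Finset.range n, (-1:ℂ)^t * (∏ m ∈ Finset.range t, (2*(n:ℂ) - 2*m - 1))
        / (4*(Real.pi:ℂ)*Complex.I*lam)^(t+1)
        * (e (lam*r^2) * (r:ℂ)^(2*(n-t)-1) - e (lam*(-r)^2) * ((-r:ℝ):ℂ)^(2*(n-t)-1)))
    + ((-1:ℂ)^n * (Nat.doubleFactorial (2*n-1) : ℂ) / (4*(Real.pi:ℂ)*Complex.I*lam)^n)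
        * ∫ y in (-r)..r, e (lam*y^2) := by
  have hc : (4*(Real.pi:ℂ)*Complex.I*lam) ≠ 0 := by
    simp [Complex.ofReal_eq_zero, Real.pi_ne_zero, Complex.I_ne_zero, hlam]
  intro n
  induction n with
  | zero => simp [Nat.doubleFactorial]
  | succ n IH =>
    set c : ℂ := 4*(Real.pi:ℂ)*Complex.I*lam with hcdef
    set I0 : ℂ := ∫ y in (-r)..r, e (lam*y^2) with hI0
    have hibp := ibp lam r n
    rw [IH] at hibp
    set A : ℂ := ∑ t ∈ Finset.range n, (-1:ℂ)^t * (∏ m ∈ Finset.range t, (2*(n:ℂ) - 2*m - 1))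
        / c^(t+1)
        * (e (lam*r^2) * (r:ℂ)^(2*(n-t)-1) - e (lam*(-r)^2) * ((-r:ℝ):ℂ)^(2*(n-t)-1)) with hA
    set B : ℂ := e (lam*r^2) * (r:ℂ)^(2*n+1) - e (lam*(-r)^2) * ((-r:ℝ):ℂ)^(2*n+1) with hB
    set D : ℂ := (-1:ℂ)^n * (Nat.doubleFactorial (2*n-1) : ℂ) / c^n with hD
    -- hibp : c * I(n+1) + (2n+1) * (A + D * I0) = B
    rw [show 2*(n+1) = 2*n+2 from by ring]
    apply mul_left_cancel₀ hc
    have hL : c * (∫ y in (-r)..r, e (lam*y^2) * (y:ℂ)^(2*n+2)) = B - (2*n+1) * (A + D * I0) := by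
      linear_combination hibp
    rw [hL]
    -- now pure algebra on the RHS sum
    rw [Finset.sum_range_succ']
    have hterm : ∀ t ∈ Finset.range n,
        (-1:ℂ)^(t+1) * (∏ m ∈ Finset.range (t+1), (2*((n+1:ℕ):ℂ) - 2*m - 1)) / c^(t+1+1)
          * (e (lam*r^2) * (r:ℂ)^(2*(n+1-(t+1))-1) - e (lam*(-r)^2) * ((-r:ℝ):ℂ)^(2*(n+1-(t+1))-1))
        = (-((2*n+1)/c)) * ((-1:ℂ)^t * (∏ m ∈ Finset.range t, (2*(n:ℂ) - 2*m - 1)) / c^(t+1)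
          * (e (lam*r^2) * (r:ℂ)^(2*(n-t)-1) - e (lam*(-r)^2) * ((-r:ℝ):ℂ)^(2*(n-t)-1))) := by
      intro t _
      rw [Finset.prod_range_succ', Nat.succ_sub_succ]
      have hp : ∀ m ∈ Finset.range t, (2*((n+1:ℕ):ℂ) - 2*((m+1:ℕ):ℂ) - 1) = (2*(n:ℂ) - 2*m - 1) := by
        intro m _; push_cast; ring
      rw [Finset.prod_congr rfl hp]
      push_cast
      ring
    rw [Finset.sum_congr rfl hterm, ← Finset.mul_sum, ← hA]
    rw [show (2*(n+1-0)-1 : ℕ) = 2*n+1 from by omega,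
      show (2*n+2-1 : ℕ) = 2*(n+1)-1 from by omega, dbl_step]
    simp only [pow_zero, Finset.prod_range_zero, one_mul]
    rw [← hB, hD]
    push_cast
    field_simp
    ring

/-- For `λ ≠ 0`, `r > 0`, `j ≥ 1`, with
`φ_t(y) = (−1)^{t−1} (2j−1)(2j−3)⋯(2j−(2t−3)) / (4πλi)^t · y^{2j−(2t−1)}` for `1 ≤ t ≤ j`,
one has `∫_{−r}^{r} e(λy²) y^{2j} dy = [e(λy²) Σ_{t=1}^{j} φ_t(y)]_{−r}^{r}
+ ((−1)^j (2j−1)!!/(4πiλ)^j) ∫_{−r}^{r} e(λy²) dy`. -/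
theorem weighted_stationary_phase_stmt14
    (lam : ℝ) (hlam : lam ≠ 0) (r : ℝ) (hr : 0 < r) (j : ℕ) (hj : 1 ≤ j) :
    let φ : ℕ → ℝ → ℂ := fun t y =>
      (-1 : ℂ) ^ (t - 1) *
        (∏ m ∈ Finset.Icc 1 (t - 1), (2 * (j : ℂ) - (2 * (m : ℂ) - 1))) /
        (4 * Real.pi * lam * Complex.I) ^ t *
        (y : ℂ) ^ (2 * (j : ℤ) - (2 * (t : ℤ) - 1))
    let S : ℝ → ℂ := fun y => e (lam * y ^ 2) * ∑ t ∈ Finset.Icc 1 j, φ t y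
    (∫ y in (-r)..r, e (lam * y ^ 2) * (y : ℂ) ^ (2 * j)) =
      (S r - S (-r)) +
        ((-1 : ℂ) ^ j * (Nat.doubleFactorial (2 * j - 1) : ℂ) /
            (4 * Real.pi * Complex.I * lam) ^ j) *
          ∫ y in (-r)..r, e (lam * y ^ 2) := by
  intro φ S
  rw [key lam r hlam j]
  congr 1
  simp only [S]
  rw [Finset.mul_sum, Finset.mul_sum, ← Finset.sum_sub_distrib,
    ← Finset.Ico_add_one_right_eq_Icc, Finset.sum_Ico_eq_sum_range, Nat.add_sub_cancel]
  refine Finset.sum_congr rfl fun t ht => ?_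
  rw [Finset.mem_range] at ht
  simp only [φ, Nat.add_sub_cancel_left]
  rw [show (2*(j:ℤ) - (2*((1+t : ℕ):ℤ) - 1)) = ((2*(j-t)-1 : ℕ) : ℤ) from by omega]
  simp only [zpow_natCast]
  rw [← Finset.Ico_add_one_right_eq_Icc, Finset.prod_Ico_eq_prod_range, Nat.add_sub_cancel]
  have hp : ∀ m ∈ Finset.range t, (2*(j:ℂ) - (2*((1+m : ℕ):ℂ) - 1)) = (2*(j:ℂ) - 2*m - 1) := by
    intro m _; push_cast; ring
  rw [Finset.prod_congr rfl hp]
  ring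
end

section
/- Let n ≥ 1 be an integer, λ > 0, A > 0, and r ≥ λ^{−1/2}. Let Q : [−r, r] → ℝ be n+2 times continuously differentiable with |Q^{(t)}(y)| ≤ A |y|^{2n+1−t} for all y ∈ [−r,r] and 0 ≤ t ≤ n+2. Define, for y ≠ 0, ψ_1(y) = Q(y)/(4πi λ y) and ψ_k(y) = −ψ'_{k−1}(y)/(4πi λ y) for 2 ≤ k ≤ n+1. Then ∫_{−r}^{r} Q(y) e(λ y²) dy = [ e(λ y²) Σ_{k=1}^{n+1} ψ_k(y) ]_{−r}^{r} + O( A λ^{−(n+1)} ), with implied constant depending only on n. -/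
open Complex Set Finset intervalIntegral MeasureTheory

def cc : ℕ → ℕ → ℤ
  | 0, _ => 0
  | 1, j => if j = 0 then 1 else 0
  | k + 2, j =>
      -((if j = 0 then 0 else cc (k + 1) (j - 1))
        + ((j : ℤ) + 1 - 2 * (k + 1)) * cc (k + 1) j)
lemma cc_eq_zero : ∀ k j, k ≤ j → cc k j = 0
  | 0, j, _ => rfl
  | 1, j, h => by
    have : j ≠ 0 := by omega
    simp [cc, this]
  | k + 2, j, h => by
    have h1 : cc (k + 1) (j - 1) = 0 := cc_eq_zero (k + 1) (j - 1) (by omega)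
    have h2 : cc (k + 1) j = 0 := cc_eq_zero (k + 1) j (by omega)
    have : j ≠ 0 := by omega
    simp [cc, this, h1, h2]
noncomputable def DD (Q : ℝ → ℝ) (r : ℝ) (j : ℕ) : ℝ → ℝ :=
  iteratedDerivWithin j Q (Icc (-r) r)
noncomputable def Phi (n : ℕ) (lam r : ℝ) (Q : ℝ → ℝ) (k : ℕ) (y : ℝ) : ℂ :=
  (∑ j ∈ Finset.range (n + 3),
      (cc k j : ℂ) * ((DD Q r j y : ℂ) * (y : ℂ) ^ ((j : ℤ) + 1 - 2 * k))) /
    (4 * Real.pi * Complex.I * lam) ^ k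
noncomputable def Phid (n : ℕ) (lam r : ℝ) (Q : ℝ → ℝ) (k : ℕ) (y : ℝ) : ℂ :=
  (∑ j ∈ Finset.range (n + 3),
      (cc k j : ℂ) * ((DD Q r (j + 1) y : ℂ) * (y : ℂ) ^ ((j : ℤ) + 1 - 2 * k)
        + ((j : ℤ) + 1 - 2 * k) * ((DD Q r j y : ℂ) * (y : ℂ) ^ ((j : ℤ) - 2 * k)))) /
    (4 * Real.pi * Complex.I * lam) ^ k
section Main
variable {n : ℕ} {lam A r : ℝ} {Q : ℝ → ℝ}

lemma hasDerivWithinAt_term (hQ : ContDiffOn ℝ (n + 2) Q (Icc (-r) r)) (hr : 0 < r)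
    {j : ℕ} (hj : j + 1 ≤ n + 2) {y : ℝ} (hy : y ∈ Icc (-r) r) (hy0 : y ≠ 0) (m : ℤ) :
    HasDerivWithinAt (fun z : ℝ => (DD Q r j z : ℂ) * (z : ℂ) ^ m)
      ((DD Q r (j + 1) y : ℂ) * (y : ℂ) ^ m
        + (m : ℂ) * ((DD Q r j y : ℂ) * (y : ℂ) ^ (m - 1))) (Icc (-r) r) y := by
  have hud : UniqueDiffOn ℝ (Icc (-r) r) := uniqueDiffOn_Icc (by linarith)
  have hdiff : DifferentiableOn ℝ (DD Q r j) (Icc (-r) r) := by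
    apply hQ.differentiableOn_iteratedDerivWithin _ hud
    exact_mod_cast (by omega : j < n + 2)
  have h1 : HasDerivWithinAt (DD Q r j) (DD Q r (j + 1) y) (Icc (-r) r) y := by
    have h := (hdiff y hy).hasDerivWithinAt
    rwa [show derivWithin (DD Q r j) (Icc (-r) r) y = DD Q r (j + 1) y from
      (congrFun (iteratedDerivWithin_succ (n := j) (f := Q) (s := Icc (-r) r)) y).symm] at h
  have h1c : HasDerivWithinAt (fun z : ℝ => (DD Q r j z : ℂ))
      ((DD Q r (j + 1) y : ℝ) : ℂ) (Icc (-r) r) y := by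
    exact h1.ofReal_comp
  have h2 : HasDerivWithinAt (fun z : ℝ => (z : ℂ) ^ m) ((m : ℂ) * (y : ℂ) ^ (m - 1))
      (Icc (-r) r) y := by
    have := (hasDerivAt_zpow m (y : ℂ) (Or.inl (by exact_mod_cast hy0))).comp_ofReal
    exact this.hasDerivWithinAt
  have h := h1c.mul h2
  refine h.congr_deriv ?_
  ring

lemma hasDerivWithinAt_Phi (hQ : ContDiffOn ℝ (n + 2) Q (Icc (-r) r)) (hr : 0 < r)
    {k : ℕ} (hk2 : k ≤ n + 2) {y : ℝ} (hy : y ∈ Icc (-r) r) (hy0 : y ≠ 0) :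
    HasDerivWithinAt (Phi n lam r Q k) (Phid n lam r Q k y) (Icc (-r) r) y := by
  unfold Phi Phid
  apply HasDerivWithinAt.div_const
  apply HasDerivWithinAt.fun_sum
  intro j hj
  by_cases hjn : j + 1 ≤ n + 2
  · have h := (hasDerivWithinAt_term hQ hr hjn hy hy0 ((j : ℤ) + 1 - 2 * k)).const_mul
      ((cc k j : ℤ) : ℂ)
    refine h.congr_deriv ?_
    rw [show (j : ℤ) - 2 * k = ((j : ℤ) + 1 - 2 * k) - 1 by ring]
    push_cast
    ring
  · have hc : cc k j = 0 := cc_eq_zero k j (by omega)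
    simp only [hc, Int.cast_zero, zero_mul]
    exact hasDerivWithinAt_const y _ 0

lemma Phid_eq (hlam : 0 < lam) {k : ℕ} (hk1 : 1 ≤ k) (hk2 : k ≤ n + 2) {y : ℝ}
    (hy0 : y ≠ 0) :
    Phid n lam r Q k y
      = -((4 * Real.pi * Complex.I * lam * y) * Phi n lam r Q (k + 1) y) := by
  obtain ⟨k', rfl⟩ : ∃ k', k = k' + 1 := ⟨k - 1, by omega⟩
  have hY : (y : ℂ) ≠ 0 := by exact_mod_cast hy0
  have hc4 : (4 * Real.pi * Complex.I * lam : ℂ) ≠ 0 := by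
    simp [Complex.ext_iff, Real.pi_ne_zero, hlam.ne']
  set c4 : ℂ := 4 * Real.pi * Complex.I * lam with hc4def
  set Y : ℂ := (y : ℂ) with hYdef
  set k := k' + 1 with hkdef
  set G : ℕ → ℂ := fun j => ((if j = 0 then 0 else cc k (j - 1) : ℤ) : ℂ)
    * ((DD Q r j y : ℂ) * Y ^ ((j : ℤ) - 2 * k)) with hG
  have shift : (∑ j ∈ Finset.range (n + 3),
      (cc k j : ℂ) * ((DD Q r (j + 1) y : ℂ) * Y ^ ((j : ℤ) + 1 - 2 * k)))
      = ∑ j ∈ Finset.range (n + 3), G j := by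
    have h1 : ∀ j ∈ Finset.range (n + 3),
        (cc k j : ℂ) * ((DD Q r (j + 1) y : ℂ) * Y ^ ((j : ℤ) + 1 - 2 * k)) = G (j + 1) := by
      intro j hj
      simp only [hG, Nat.add_sub_cancel, if_neg (Nat.succ_ne_zero j)]
      push_cast
      ring_nf
    rw [Finset.sum_congr rfl h1]
    have h3 : G 0 = 0 := by simp [hG]
    have h4 : G (n + 3) = 0 := by
      have hcz : cc k (n + 2) = 0 := cc_eq_zero k (n + 2) (by omega)
      simp [hG, hcz]
    calc (∑ j ∈ Finset.range (n + 3), G (j + 1))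
        = (∑ j ∈ Finset.range (n + 3), G (j + 1)) + G 0 := by rw [h3, add_zero]
      _ = ∑ j ∈ Finset.range (n + 3 + 1), G j := (Finset.sum_range_succ' G (n + 3)).symm
      _ = ∑ j ∈ Finset.range (n + 3), G j := by rw [Finset.sum_range_succ, h4, add_zero]
  have hnum : (∑ j ∈ Finset.range (n + 3),
      (cc k j : ℂ) * ((DD Q r (j + 1) y : ℂ) * Y ^ ((j : ℤ) + 1 - 2 * k)
        + ((j : ℤ) + 1 - 2 * k) * ((DD Q r j y : ℂ) * Y ^ ((j : ℤ) - 2 * k))))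
      = -(Y * ∑ j ∈ Finset.range (n + 3),
          (cc (k + 1) j : ℂ) * ((DD Q r j y : ℂ) * Y ^ ((j : ℤ) + 1 - 2 * (k + 1)))) := by
    rw [Finset.mul_sum, ← Finset.sum_neg_distrib]
    have hsplit : ∀ j ∈ Finset.range (n + 3),
        (cc k j : ℂ) * ((DD Q r (j + 1) y : ℂ) * Y ^ ((j : ℤ) + 1 - 2 * k)
          + ((j : ℤ) + 1 - 2 * k) * ((DD Q r j y : ℂ) * Y ^ ((j : ℤ) - 2 * k)))
        = (cc k j : ℂ) * ((DD Q r (j + 1) y : ℂ) * Y ^ ((j : ℤ) + 1 - 2 * k))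
          + (cc k j : ℂ) * (((j : ℤ) + 1 - 2 * k) * ((DD Q r j y : ℂ) * Y ^ ((j : ℤ) - 2 * k))) := by
      intro j hj; ring
    rw [Finset.sum_congr rfl hsplit, Finset.sum_add_distrib, shift, ← Finset.sum_add_distrib]
    apply Finset.sum_congr rfl
    intro j hj
    simp only [hG]
    have hcc : cc (k + 1) j = -((if j = 0 then 0 else cc k (j - 1))
        + ((j : ℤ) + 1 - 2 * (k : ℤ)) * cc k j) := by simp [hkdef, cc]
    have hccC : ((cc (k + 1) j : ℤ) : ℂ) = -((((if j = 0 then 0 else cc k (j - 1) : ℤ)) : ℂ)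
        + (((j : ℤ) : ℂ) + 1 - 2 * ((k : ℤ) : ℂ)) * ((cc k j : ℤ) : ℂ)) := by
      rw [hcc]; push_cast; ring
    have hpow : Y ^ ((j : ℤ) - 2 * (k : ℤ)) = Y ^ ((j : ℤ) + 1 - 2 * ((k : ℤ) + 1)) * Y := by
      rw [← zpow_add_one₀ hY]; congr 1; ring
    rw [hccC, hpow]
    push_cast
    ring
  unfold Phi Phid
  rw [hnum]
  rw [show c4 ^ (k + 1) = c4 ^ k * c4 by ring]
  rw [eq_comm]
  push_cast
  field_simp
  rw [← hc4def, mul_div_cancel_left₀ _ (pow_ne_zero k hc4)]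

lemma Phi_one (hlam : 0 < lam) {y : ℝ} (hy0 : y ≠ 0) :
    Phi n lam r Q 1 y = (Q y : ℂ) / (4 * Real.pi * Complex.I * lam * y) := by
  have hY : (y : ℂ) ≠ 0 := by exact_mod_cast hy0
  have hc4 : (4 * Real.pi * Complex.I * lam : ℂ) ≠ 0 := by
    simp [Complex.ext_iff, Real.pi_ne_zero, hlam.ne']
  unfold Phi
  rw [Finset.sum_eq_single_of_mem 0 (Finset.mem_range.2 (by omega))]
  · have hD0 : DD Q r 0 y = Q y := by
      simp [DD, iteratedDerivWithin_zero]
    rw [hD0]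
    have : ((0 : ℕ) : ℤ) + 1 - 2 * (1 : ℕ) = -1 := by norm_num
    rw [this, zpow_neg_one, show (cc 1 0 : ℂ) = 1 by simp [cc]]
    rw [pow_one]
    field_simp
  · intro j _ hj0
    have : cc 1 j = 0 := by simp [cc, hj0]
    simp [this]

lemma psi_eq_Phi (hlam : 0 < lam) (hr : 0 < r)
    (hQ : ContDiffOn ℝ (n + 2) Q (Icc (-r) r)) {ψ : ℕ → ℝ → ℂ}
    (hψ1 : ∀ y ∈ Icc (-r) r, y ≠ 0 →
      ψ 1 y = (Q y : ℂ) / (4 * Real.pi * Complex.I * lam * y))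
    (hψk : ∀ k, 2 ≤ k → k ≤ n + 1 → ∀ y ∈ Icc (-r) r, y ≠ 0 →
      ψ k y = -(derivWithin (ψ (k - 1)) (Icc (-r) r) y) /
        (4 * Real.pi * Complex.I * lam * y)) :
    ∀ k, 1 ≤ k → k ≤ n + 1 → ∀ y ∈ Icc (-r) r, y ≠ 0 → ψ k y = Phi n lam r Q k y := by
  have hud : UniqueDiffOn ℝ (Icc (-r) r) := uniqueDiffOn_Icc (by linarith)
  intro k hk1
  induction k, hk1 using Nat.le_induction with
  | base => intro _ y hy hy0; rw [hψ1 y hy hy0, Phi_one hlam hy0]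
  | succ k hk ih =>
    intro hk2 y hy hy0
    have hkn : k ≤ n + 1 := by omega
    have ihk := ih hkn
    have hY : (y : ℂ) ≠ 0 := by exact_mod_cast hy0
    have hc4 : (4 * Real.pi * Complex.I * lam : ℂ) ≠ 0 := by
      simp [Complex.ext_iff, Real.pi_ne_zero, hlam.ne']
    have hrec := hψk (k + 1) (by omega) (by omega) y hy hy0
    rw [show k + 1 - 1 = k from rfl] at hrec
    have hEq : derivWithin (ψ k) (Icc (-r) r) y = derivWithin (Phi n lam r Q k) (Icc (-r) r) y := by
      apply Filter.EventuallyEq.derivWithin_eq _ (ihk y hy hy0)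
      have hne : ∀ᶠ z in nhds y, z ≠ (0 : ℝ) := isOpen_ne.eventually_mem hy0
      filter_upwards [self_mem_nhdsWithin, eventually_nhdsWithin_of_eventually_nhds hne]
        with z hz hz0
      exact ihk z hz hz0
    have hder : derivWithin (Phi n lam r Q k) (Icc (-r) r) y = Phid n lam r Q k y :=
      (hasDerivWithinAt_Phi hQ hr (by omega) hy hy0).derivWithin (hud y hy)
    rw [hrec, hEq, hder, Phid_eq hlam hk (by omega) hy0]
    field_simp
    exact mul_div_cancel_left₀ _ (by exact_mod_cast hlam.ne')

noncomputable def CB (n k : ℕ) : ℝ := ∑ j ∈ Finset.range (n + 3), |(cc k j : ℝ)|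

noncomputable def CBd (n k : ℕ) : ℝ :=
  ∑ j ∈ Finset.range (n + 3), |(cc k j : ℝ)| * (1 + |((j : ℝ) + 1 - 2 * k)|)

lemma CB_nonneg (n k : ℕ) : 0 ≤ CB n k :=
  Finset.sum_nonneg fun _ _ => abs_nonneg _

lemma CBd_nonneg (n k : ℕ) : 0 ≤ CBd n k :=
  Finset.sum_nonneg fun _ _ => mul_nonneg (abs_nonneg _)
    (by positivity)

lemma norm_c4_pow (hlam : 0 < lam) (k : ℕ) :
    ‖(4 * Real.pi * Complex.I * lam : ℂ) ^ k‖ = (4 * Real.pi * lam) ^ k := by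
  rw [norm_pow]
  congr 1
  simp [norm_mul, Complex.norm_I, Complex.norm_real, Real.norm_eq_abs,
    abs_of_pos Real.pi_pos, abs_of_pos hlam]

lemma lam_pow_le (hlam : 0 < lam) (k : ℕ) : lam ^ k ≤ (4 * Real.pi * lam) ^ k := by
  apply pow_le_pow_left₀ hlam.le
  nlinarith [Real.pi_gt_three]

lemma norm_Phi_le (hn : 1 ≤ n) (hlam : 0 < lam) (hA : 0 < A)
    (hbd : ∀ t, t ≤ n + 2 → ∀ y ∈ Icc (-r) r,
      |iteratedDerivWithin t Q (Icc (-r) r) y| ≤ A * |y| ^ (2 * n + 1 - t))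
    {k : ℕ} (hk1 : 1 ≤ k) (hk2 : k ≤ n + 2) {y : ℝ} (hy : y ∈ Icc (-r) r) (hy0 : y ≠ 0) :
    ‖Phi n lam r Q k y‖ ≤ CB n k * A * (lam ^ k)⁻¹ * |y| ^ (2 * (n : ℤ) + 2 - 2 * k) := by
  have hay : (0 : ℝ) < |y| := abs_pos.2 hy0
  have hterm : ∀ j ∈ Finset.range (n + 3),
      ‖(cc k j : ℂ) * ((DD Q r j y : ℂ) * (y : ℂ) ^ ((j : ℤ) + 1 - 2 * k))‖
        ≤ |(cc k j : ℝ)| * (A * |y| ^ (2 * (n : ℤ) + 2 - 2 * k)) := by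
    intro j hj
    rw [Finset.mem_range] at hj
    have hD : |DD Q r j y| ≤ A * |y| ^ (2 * n + 1 - j) := hbd j (by omega) y hy
    have hcast : ((2 * n + 1 - j : ℕ) : ℤ) = 2 * (n : ℤ) + 1 - j := by omega
    have hDz : |DD Q r j y| ≤ A * |y| ^ (2 * (n : ℤ) + 1 - (j : ℤ)) := by
      rwa [← zpow_natCast |y| (2 * n + 1 - j), hcast] at hD
    rw [norm_mul, norm_mul, norm_zpow]
    rw [show ‖((cc k j : ℤ) : ℂ)‖ = |(cc k j : ℝ)| by
      rw [← Complex.ofReal_intCast, Complex.norm_real, Real.norm_eq_abs]]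
    rw [show ‖((y : ℝ) : ℂ)‖ = |y| by rw [Complex.norm_real, Real.norm_eq_abs]]
    rw [show ‖((DD Q r j y : ℝ) : ℂ)‖ = |DD Q r j y| by
      rw [Complex.norm_real, Real.norm_eq_abs]]
    apply mul_le_mul_of_nonneg_left _ (abs_nonneg _)
    calc |DD Q r j y| * |y| ^ ((j : ℤ) + 1 - 2 * k)
        ≤ (A * |y| ^ (2 * (n : ℤ) + 1 - (j : ℤ))) * |y| ^ ((j : ℤ) + 1 - 2 * k) := by
          apply mul_le_mul_of_nonneg_right hDz (zpow_nonneg (abs_nonneg _) _)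
      _ = A * |y| ^ (2 * (n : ℤ) + 2 - 2 * k) := by
          rw [mul_assoc, ← zpow_add₀ hay.ne']
          congr 2
          ring
  calc ‖Phi n lam r Q k y‖
      = ‖∑ j ∈ Finset.range (n + 3),
          (cc k j : ℂ) * ((DD Q r j y : ℂ) * (y : ℂ) ^ ((j : ℤ) + 1 - 2 * k))‖
        / ‖(4 * Real.pi * Complex.I * lam : ℂ) ^ k‖ := by rw [Phi, norm_div]
    _ ≤ (CB n k * (A * |y| ^ (2 * (n : ℤ) + 2 - 2 * k))) / lam ^ k := by
        apply div_le_div₀ (mul_nonneg (CB_nonneg n k) (by positivity)) _ (pow_pos hlam k)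
          (by rw [norm_c4_pow hlam]; exact lam_pow_le hlam k)
        calc ‖∑ j ∈ Finset.range (n + 3),
            (cc k j : ℂ) * ((DD Q r j y : ℂ) * (y : ℂ) ^ ((j : ℤ) + 1 - 2 * k))‖
            ≤ ∑ j ∈ Finset.range (n + 3),
              ‖(cc k j : ℂ) * ((DD Q r j y : ℂ) * (y : ℂ) ^ ((j : ℤ) + 1 - 2 * k))‖ :=
              norm_sum_le _ _
          _ ≤ ∑ j ∈ Finset.range (n + 3),
              |(cc k j : ℝ)| * (A * |y| ^ (2 * (n : ℤ) + 2 - 2 * k)) :=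
              Finset.sum_le_sum hterm
          _ = CB n k * (A * |y| ^ (2 * (n : ℤ) + 2 - 2 * k)) := by
              rw [CB, ← Finset.sum_mul]
    _ = CB n k * A * (lam ^ k)⁻¹ * |y| ^ (2 * (n : ℤ) + 2 - 2 * k) := by
        field_simp

lemma norm_Phid_le (hn : 1 ≤ n) (hlam : 0 < lam) (hA : 0 < A)
    (hbd : ∀ t, t ≤ n + 2 → ∀ y ∈ Icc (-r) r,
      |iteratedDerivWithin t Q (Icc (-r) r) y| ≤ A * |y| ^ (2 * n + 1 - t))
    {k : ℕ} (hk1 : 1 ≤ k) (hk2 : k ≤ n + 2) {y : ℝ} (hy : y ∈ Icc (-r) r) (hy0 : y ≠ 0) :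
    ‖Phid n lam r Q k y‖ ≤ CBd n k * A * (lam ^ k)⁻¹ * |y| ^ (2 * (n : ℤ) + 1 - 2 * k) := by
  have hay : (0 : ℝ) < |y| := abs_pos.2 hy0
  have hterm : ∀ j ∈ Finset.range (n + 3),
      ‖(cc k j : ℂ) * ((DD Q r (j + 1) y : ℂ) * (y : ℂ) ^ ((j : ℤ) + 1 - 2 * k)
          + ((j : ℤ) + 1 - 2 * k) * ((DD Q r j y : ℂ) * (y : ℂ) ^ ((j : ℤ) - 2 * k)))‖
        ≤ (|(cc k j : ℝ)| * (1 + |((j : ℝ) + 1 - 2 * k)|))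
            * (A * |y| ^ (2 * (n : ℤ) + 1 - 2 * k)) := by
    intro j hj
    rw [Finset.mem_range] at hj
    by_cases hcz : cc k j = 0
    · rw [hcz]
      simp only [Int.cast_zero, zero_mul, norm_zero]
      positivity
    · have hjk : j < k := by
        by_contra hc
        exact hcz (cc_eq_zero k j (by omega))
      have hj2 : j + 1 ≤ n + 2 := by omega
      -- bounds on the two parts
      have hD1 : |DD Q r (j + 1) y| ≤ A * |y| ^ (2 * n + 1 - (j + 1)) := hbd (j + 1) hj2 y hy
      have hD0 : |DD Q r j y| ≤ A * |y| ^ (2 * n + 1 - j) := hbd j (by omega) y hy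
      have hcast1 : ((2 * n + 1 - (j + 1) : ℕ) : ℤ) = 2 * (n : ℤ) - j := by omega
      have hcast0 : ((2 * n + 1 - j : ℕ) : ℤ) = 2 * (n : ℤ) + 1 - j := by omega
      have hD1z : |DD Q r (j + 1) y| ≤ A * |y| ^ (2 * (n : ℤ) - (j : ℤ)) := by
        rwa [← zpow_natCast |y| (2 * n + 1 - (j + 1)), hcast1] at hD1
      have hD0z : |DD Q r j y| ≤ A * |y| ^ (2 * (n : ℤ) + 1 - (j : ℤ)) := by
        rwa [← zpow_natCast |y| (2 * n + 1 - j), hcast0] at hD0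
      have hYnorm : ‖((y : ℝ) : ℂ)‖ = |y| := by rw [Complex.norm_real, Real.norm_eq_abs]
      have hmnorm : ‖(((j : ℤ) : ℂ) + 1 - 2 * ((k : ℕ) : ℂ))‖ = |((j : ℝ) + 1 - 2 * k)| := by
        rw [show (((j : ℤ) : ℂ) + 1 - 2 * ((k : ℕ) : ℂ)) = (((j : ℝ) + 1 - 2 * k : ℝ) : ℂ) by
          push_cast; ring, Complex.norm_real, Real.norm_eq_abs]
      calc ‖(cc k j : ℂ) * ((DD Q r (j + 1) y : ℂ) * (y : ℂ) ^ ((j : ℤ) + 1 - 2 * k)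
              + ((j : ℤ) + 1 - 2 * k) * ((DD Q r j y : ℂ) * (y : ℂ) ^ ((j : ℤ) - 2 * k)))‖
          ≤ |(cc k j : ℝ)| * (‖(DD Q r (j + 1) y : ℂ) * (y : ℂ) ^ ((j : ℤ) + 1 - 2 * k)‖
              + ‖(((j : ℤ) : ℂ) + 1 - 2 * ((k : ℕ) : ℂ)) * ((DD Q r j y : ℂ) * (y : ℂ) ^ ((j : ℤ) - 2 * k))‖) := by
            rw [norm_mul]
            rw [show ‖((cc k j : ℤ) : ℂ)‖ = |(cc k j : ℝ)| by
              rw [← Complex.ofReal_intCast, Complex.norm_real, Real.norm_eq_abs]]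
            exact mul_le_mul_of_nonneg_left (norm_add_le _ _) (abs_nonneg _)
        _ ≤ |(cc k j : ℝ)| * ((A * |y| ^ (2 * (n : ℤ) + 1 - 2 * k))
              + |((j : ℝ) + 1 - 2 * k)| * (A * |y| ^ (2 * (n : ℤ) + 1 - 2 * k))) := by
            apply mul_le_mul_of_nonneg_left _ (abs_nonneg _)
            apply add_le_add
            · rw [norm_mul, norm_zpow, hYnorm,
                show ‖((DD Q r (j + 1) y : ℝ) : ℂ)‖ = |DD Q r (j + 1) y| by
                  rw [Complex.norm_real, Real.norm_eq_abs]]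
              calc |DD Q r (j + 1) y| * |y| ^ ((j : ℤ) + 1 - 2 * k)
                  ≤ (A * |y| ^ (2 * (n : ℤ) - (j : ℤ))) * |y| ^ ((j : ℤ) + 1 - 2 * k) :=
                    mul_le_mul_of_nonneg_right hD1z (zpow_nonneg (abs_nonneg _) _)
                _ = A * |y| ^ (2 * (n : ℤ) + 1 - 2 * k) := by
                    rw [mul_assoc, ← zpow_add₀ hay.ne']
                    congr 2
                    ring
            · rw [norm_mul, norm_mul, norm_zpow, hYnorm, hmnorm,
                show ‖((DD Q r j y : ℝ) : ℂ)‖ = |DD Q r j y| by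
                  rw [Complex.norm_real, Real.norm_eq_abs]]
              apply mul_le_mul_of_nonneg_left _ (abs_nonneg _)
              calc |DD Q r j y| * |y| ^ ((j : ℤ) - 2 * k)
                  ≤ (A * |y| ^ (2 * (n : ℤ) + 1 - (j : ℤ))) * |y| ^ ((j : ℤ) - 2 * k) :=
                    mul_le_mul_of_nonneg_right hD0z (zpow_nonneg (abs_nonneg _) _)
                _ = A * |y| ^ (2 * (n : ℤ) + 1 - 2 * k) := by
                    rw [mul_assoc, ← zpow_add₀ hay.ne']
                    congr 2
                    ring
        _ = (|(cc k j : ℝ)| * (1 + |((j : ℝ) + 1 - 2 * k)|))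
              * (A * |y| ^ (2 * (n : ℤ) + 1 - 2 * k)) := by ring
  calc ‖Phid n lam r Q k y‖
      = ‖∑ j ∈ Finset.range (n + 3),
          (cc k j : ℂ) * ((DD Q r (j + 1) y : ℂ) * (y : ℂ) ^ ((j : ℤ) + 1 - 2 * k)
            + ((j : ℤ) + 1 - 2 * k) * ((DD Q r j y : ℂ) * (y : ℂ) ^ ((j : ℤ) - 2 * k)))‖
        / ‖(4 * Real.pi * Complex.I * lam : ℂ) ^ k‖ := by rw [Phid, norm_div]
    _ ≤ (CBd n k * (A * |y| ^ (2 * (n : ℤ) + 1 - 2 * k))) / lam ^ k := by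
        apply div_le_div₀ (mul_nonneg (CBd_nonneg n k) (by positivity)) _ (pow_pos hlam k)
          (by rw [norm_c4_pow hlam]; exact lam_pow_le hlam k)
        calc ‖∑ j ∈ Finset.range (n + 3),
            (cc k j : ℂ) * ((DD Q r (j + 1) y : ℂ) * (y : ℂ) ^ ((j : ℤ) + 1 - 2 * k)
              + ((j : ℤ) + 1 - 2 * k) * ((DD Q r j y : ℂ) * (y : ℂ) ^ ((j : ℤ) - 2 * k)))‖
            ≤ ∑ j ∈ Finset.range (n + 3),
              ‖(cc k j : ℂ) * ((DD Q r (j + 1) y : ℂ) * (y : ℂ) ^ ((j : ℤ) + 1 - 2 * k)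
                + ((j : ℤ) + 1 - 2 * k) * ((DD Q r j y : ℂ) * (y : ℂ) ^ ((j : ℤ) - 2 * k)))‖ :=
              norm_sum_le _ _
          _ ≤ ∑ j ∈ Finset.range (n + 3),
              (|(cc k j : ℝ)| * (1 + |((j : ℝ) + 1 - 2 * k)|))
                * (A * |y| ^ (2 * (n : ℤ) + 1 - 2 * k)) :=
              Finset.sum_le_sum hterm
          _ = CBd n k * (A * |y| ^ (2 * (n : ℤ) + 1 - 2 * k)) := by
              rw [CBd, ← Finset.sum_mul]
    _ = CBd n k * A * (lam ^ k)⁻¹ * |y| ^ (2 * (n : ℤ) + 1 - 2 * k) := by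
        field_simp

lemma continuousOn_DD_C (hQ : ContDiffOn ℝ (n + 2) Q (Icc (-r) r)) (hr : 0 < r)
    {j : ℕ} (hj : j ≤ n + 2) :
    ContinuousOn (fun y : ℝ => ((DD Q r j y : ℝ) : ℂ)) (Icc (-r) r) := by
  have hud : UniqueDiffOn ℝ (Icc (-r) r) := uniqueDiffOn_Icc (by linarith)
  exact Complex.continuous_ofReal.comp_continuousOn
    (hQ.continuousOn_iteratedDerivWithin (by exact_mod_cast hj) hud)

lemma continuousOn_Phid (hQ : ContDiffOn ℝ (n + 2) Q (Icc (-r) r)) (hr : 0 < r)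
    {k : ℕ} (hk2 : k ≤ n + 2) :
    ContinuousOn (Phid n lam r Q k) (Icc (-r) r \ {0}) := by
  unfold Phid
  apply ContinuousOn.div_const
  apply continuousOn_finset_sum
  intro j hj
  by_cases hcz : cc k j = 0
  · simp only [hcz, Int.cast_zero, zero_mul]
    exact continuousOn_const
  · have hjk : j < k := by
      by_contra hc
      exact hcz (cc_eq_zero k j (by omega))
    have hzpow : ∀ m : ℤ, ContinuousOn (fun y : ℝ => (y : ℂ) ^ m) (Icc (-r) r \ {0}) := by
      intro m
      apply ContinuousOn.zpow₀ (Complex.continuous_ofReal.continuousOn)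
      intro x hx
      left
      exact_mod_cast hx.2
    refine continuousOn_const.mul (ContinuousOn.add ?_ ?_)
    · exact ((continuousOn_DD_C hQ hr (by omega)).mono diff_subset).mul (hzpow _)
    · exact continuousOn_const.mul
        (((continuousOn_DD_C hQ hr (by omega)).mono diff_subset).mul (hzpow _))

lemma hasDerivAt_e (lam : ℝ) (y : ℝ) :
    HasDerivAt (fun y : ℝ => e (lam * y ^ 2))
      (4 * Real.pi * Complex.I * lam * y * e (lam * y ^ 2)) y := by
  have h1 : HasDerivAt (fun y : ℝ => lam * y ^ 2) (lam * (2 * y)) y := by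
    simpa using (hasDerivAt_pow 2 y).const_mul lam
  have h2 := h1.ofReal_comp
  have h3 := HasDerivAt.const_mul (2 * (Real.pi : ℂ) * Complex.I) h2
  have h4 := h3.cexp
  refine h4.congr_deriv ?_
  unfold e
  push_cast
  ring

lemma sum_telescope (hlam : 0 < lam) (hr : 0 < r)
    (hQ : ContDiffOn ℝ (n + 2) Q (Icc (-r) r))
    {y : ℝ} (hy : y ∈ Icc (-r) r) (hy0 : y ≠ 0) :
    ∀ NN, 1 ≤ NN → NN ≤ n + 1 →
      (∑ k ∈ Finset.Icc 1 NN,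
        ((4 * Real.pi * Complex.I * lam * y) * Phi n lam r Q k y + Phid n lam r Q k y))
        = (Q y : ℂ) + Phid n lam r Q NN y := by
  intro NN hNN1
  induction NN, hNN1 using Nat.le_induction with
  | base =>
    intro _
    rw [Finset.Icc_self, Finset.sum_singleton]
    have h1 : (4 * Real.pi * Complex.I * lam * y) * Phi n lam r Q 1 y = (Q y : ℂ) := by
      rw [Phi_one hlam hy0]
      have hY : (y : ℂ) ≠ 0 := by exact_mod_cast hy0
      have hc4 : (4 * Real.pi * Complex.I * lam : ℂ) ≠ 0 := by
        simp [Complex.ext_iff, Real.pi_ne_zero, hlam.ne']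
      field_simp
      exact mul_div_cancel_left₀ _ (by exact_mod_cast hlam.ne')
    rw [h1]
  | succ NN hNN ih =>
    intro hNN2
    rw [Finset.sum_Icc_succ_top (by omega : 1 ≤ NN + 1), ih (by omega)]
    have h2 : (4 * Real.pi * Complex.I * lam * y) * Phi n lam r Q (NN + 1) y
        = -Phid n lam r Q NN y := by
      rw [Phid_eq hlam hNN (by omega) hy0]
      ring
    rw [h2]
    ring

lemma hasDerivWithinAt_HH (hn : 1 ≤ n) (hlam : 0 < lam) (hr : 0 < r)
    (hQ : ContDiffOn ℝ (n + 2) Q (Icc (-r) r))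
    {y : ℝ} (hy : y ∈ Icc (-r) r) (hy0 : y ≠ 0) :
    HasDerivWithinAt
      (fun y => e (lam * y ^ 2) * ((∑ k ∈ Finset.Icc 1 (n + 1), Phi n lam r Q k y)
        + Phi n lam r Q (n + 2) y))
      ((Q y : ℂ) * e (lam * y ^ 2) + Phid n lam r Q (n + 2) y * e (lam * y ^ 2))
      (Icc (-r) r) y := by
  have he := (hasDerivAt_e lam y).hasDerivWithinAt (s := Icc (-r) r)
  have hin : HasDerivWithinAt
      (fun y => (∑ k ∈ Finset.Icc 1 (n + 1), Phi n lam r Q k y) + Phi n lam r Q (n + 2) y)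
      ((∑ k ∈ Finset.Icc 1 (n + 1), Phid n lam r Q k y) + Phid n lam r Q (n + 2) y)
      (Icc (-r) r) y := by
    apply HasDerivWithinAt.add
    · apply HasDerivWithinAt.fun_sum
      intro k hk
      rw [Finset.mem_Icc] at hk
      exact hasDerivWithinAt_Phi hQ hr (by omega) hy hy0
    · exact hasDerivWithinAt_Phi hQ hr le_rfl hy hy0
  have h := he.mul hin
  refine h.congr_deriv (Eq.symm ?_)
  have key : (4 * Real.pi * Complex.I * lam * y)
        * ((∑ k ∈ Finset.Icc 1 (n + 1), Phi n lam r Q k y) + Phi n lam r Q (n + 2) y)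
      + ((∑ k ∈ Finset.Icc 1 (n + 1), Phid n lam r Q k y) + Phid n lam r Q (n + 2) y)
      = (Q y : ℂ) + Phid n lam r Q (n + 2) y := by
    have htel := sum_telescope hlam hr hQ hy hy0 (n + 1) (by omega) le_rfl
    have hsum : ∑ k ∈ Finset.Icc 1 (n + 1),
        ((4 * Real.pi * Complex.I * lam * y) * Phi n lam r Q k y + Phid n lam r Q k y)
        = (4 * Real.pi * Complex.I * lam * y) * (∑ k ∈ Finset.Icc 1 (n + 1), Phi n lam r Q k y)
          + ∑ k ∈ Finset.Icc 1 (n + 1), Phid n lam r Q k y := by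
      rw [Finset.sum_add_distrib, Finset.mul_sum]
    rw [hsum] at htel
    have hlast : (4 * Real.pi * Complex.I * lam * y) * Phi n lam r Q (n + 2) y
        = -Phid n lam r Q (n + 1) y := by
      rw [Phid_eq hlam (by omega) (by omega) hy0]
      ring
    have hlast2 : Phid n lam r Q (n + 1) y
        = (4 * Real.pi * Complex.I * lam * y) * (∑ k ∈ Finset.Icc 1 (n + 1), Phi n lam r Q k y)
          + (∑ k ∈ Finset.Icc 1 (n + 1), Phid n lam r Q k y) - (Q y : ℂ) := by
      rw [htel]; ring
    rw [show (4 * Real.pi * Complex.I * lam * y)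
        * ((∑ k ∈ Finset.Icc 1 (n + 1), Phi n lam r Q k y) + Phi n lam r Q (n + 2) y)
        = (4 * Real.pi * Complex.I * lam * y) * (∑ k ∈ Finset.Icc 1 (n + 1), Phi n lam r Q k y)
          + (4 * Real.pi * Complex.I * lam * y) * Phi n lam r Q (n + 2) y by ring,
      hlast, hlast2]
    ring
  calc (Q y : ℂ) * e (lam * y ^ 2) + Phid n lam r Q (n + 2) y * e (lam * y ^ 2)
      = ((Q y : ℂ) + Phid n lam r Q (n + 2) y) * e (lam * y ^ 2) := by ring
    _ = ((4 * Real.pi * Complex.I * lam * y)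
          * ((∑ k ∈ Finset.Icc 1 (n + 1), Phi n lam r Q k y) + Phi n lam r Q (n + 2) y)
        + ((∑ k ∈ Finset.Icc 1 (n + 1), Phid n lam r Q k y) + Phid n lam r Q (n + 2) y))
          * e (lam * y ^ 2) := by rw [key]
    _ = _ := by ring

lemma continuous_e (lam : ℝ) : Continuous (fun y : ℝ => e (lam * y ^ 2)) :=
  continuous_iff_continuousAt.2 fun y => (hasDerivAt_e lam y).continuousAt

lemma norm_e (t : ℝ) : ‖e t‖ = 1 := by
  unfold e
  rw [show (2 * (Real.pi : ℂ) * Complex.I * t) = ((2 * Real.pi * t : ℝ) : ℂ) * Complex.I by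
    push_cast; ring]
  exact Complex.norm_exp_ofReal_mul_I _

lemma FTC_piece (hn : 1 ≤ n) (hlam : 0 < lam) (hr : 0 < r)
    (hQ : ContDiffOn ℝ (n + 2) Q (Icc (-r) r))
    {a b : ℝ} (hab : a ≤ b) (hsub : Icc a b ⊆ Icc (-r) r) (h0 : (0 : ℝ) ∉ Icc a b) :
    (∫ y in a..b, ((Q y : ℂ) * e (lam * y ^ 2) + Phid n lam r Q (n + 2) y * e (lam * y ^ 2)))
      = (e (lam * b ^ 2) * ((∑ k ∈ Finset.Icc 1 (n + 1), Phi n lam r Q k b)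
          + Phi n lam r Q (n + 2) b))
        - (e (lam * a ^ 2) * ((∑ k ∈ Finset.Icc 1 (n + 1), Phi n lam r Q k a)
          + Phi n lam r Q (n + 2) a)) := by
  have hsub' : Icc a b ⊆ Icc (-r) r \ {0} := fun x hx =>
    ⟨hsub hx, fun h => h0 (mem_singleton_iff.1 h ▸ hx)⟩
  apply intervalIntegral.integral_eq_sub_of_hasDeriv_right_of_le hab
  · intro x hx
    exact ((hasDerivWithinAt_HH hn hlam hr hQ (hsub hx)
      (fun h => h0 (h ▸ hx))).continuousWithinAt).mono hsub
  · intro x hx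
    have hxmem : x ∈ Icc a b := Ioo_subset_Icc_self hx
    have hx0 : x ≠ 0 := fun h => h0 (h ▸ hxmem)
    have hmem : Icc (-r) r ∈ nhds x := by
      apply Icc_mem_nhds
      · have ha' : -r ≤ a := (hsub ⟨le_rfl, hab⟩).1
        linarith [hx.1]
      · have hb' : b ≤ r := (hsub ⟨hab, le_rfl⟩).2
        linarith [hx.2]
    exact ((hasDerivWithinAt_HH hn hlam hr hQ (hsub hxmem) hx0).hasDerivAt
      hmem).hasDerivWithinAt
  · apply ContinuousOn.intervalIntegrable
    rw [uIcc_of_le hab]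
    apply ContinuousOn.add
    · exact (Complex.continuous_ofReal.comp_continuousOn (hQ.continuousOn.mono hsub)).mul
        (continuous_e lam).continuousOn
    · exact ((continuousOn_Phid hQ hr le_rfl).mono hsub').mul (continuous_e lam).continuousOn

lemma integral_bound {g : ℝ → ℂ} {M a b : ℝ} (ha : 0 < a) (hab : a ≤ b)
    (hg : ContinuousOn g (Icc a b))
    (hb : ∀ y ∈ Icc a b, ‖g y‖ ≤ M * y ^ (-3 : ℤ)) :
    ‖∫ y in a..b, g y‖ ≤ M * a ^ (-2 : ℤ) / 2 := by
  have hM : 0 ≤ M := by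
    have h1 := hb a ⟨le_rfl, hab⟩
    have h3 : (0 : ℝ) < a ^ (-3 : ℤ) := zpow_pos ha _
    nlinarith [norm_nonneg (g a)]
  have hgint : IntervalIntegrable g MeasureTheory.volume a b := by
    apply ContinuousOn.intervalIntegrable
    rwa [uIcc_of_le hab]
  have hbint : IntervalIntegrable (fun y : ℝ => M * y ^ (-3 : ℤ))
      MeasureTheory.volume a b := by
    apply ContinuousOn.intervalIntegrable
    rw [uIcc_of_le hab]
    apply continuousOn_const.mul
    apply ContinuousOn.zpow₀ continuousOn_id
    intro x hx
    left
    exact ne_of_gt (lt_of_lt_of_le ha hx.1)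
  have h1 : ‖∫ y in a..b, g y‖ ≤ ∫ y in a..b, ‖g y‖ :=
    intervalIntegral.norm_integral_le_integral_norm hab
  have h2 : (∫ y in a..b, ‖g y‖) ≤ ∫ y in a..b, M * y ^ (-3 : ℤ) :=
    intervalIntegral.integral_mono_on hab hgint.norm hbint hb
  have h3 : (∫ y in a..b, M * y ^ (-3 : ℤ)) = M * ((b ^ (-2 : ℤ) - a ^ (-2 : ℤ)) / (-2)) := by
    rw [intervalIntegral.integral_const_mul]
    rw [integral_zpow (Or.inr ⟨by norm_num, by
      rw [uIcc_of_le hab]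
      intro hmem
      exact absurd hmem.1 (not_le.2 ha)⟩)]
    norm_num
  have hb2 : (0 : ℝ) ≤ b ^ (-2 : ℤ) := zpow_nonneg (by linarith) _
  calc ‖∫ y in a..b, g y‖ ≤ ∫ y in a..b, M * y ^ (-3 : ℤ) := le_trans h1 h2
    _ = M * ((b ^ (-2 : ℤ) - a ^ (-2 : ℤ)) / (-2)) := h3
    _ ≤ M * a ^ (-2 : ℤ) / 2 := by nlinarith

lemma delta_sq (hlam : 0 < lam) : (1 / Real.sqrt lam) ^ (2 : ℕ) = lam⁻¹ := by
  rw [div_pow, one_pow, Real.sq_sqrt hlam.le, one_div]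

lemma delta_zpow_two (hlam : 0 < lam) : (1 / Real.sqrt lam) ^ (2 : ℤ) = lam⁻¹ := by
  rw [show (2 : ℤ) = ((2 : ℕ) : ℤ) from rfl, zpow_natCast]
  exact delta_sq hlam

lemma delta_zpow_neg_two (hlam : 0 < lam) : (1 / Real.sqrt lam) ^ (-2 : ℤ) = lam := by
  rw [show (-2 : ℤ) = -(2 : ℤ) from rfl, zpow_neg, delta_zpow_two hlam, inv_inv]

lemma pow_fact1 (hlam : 0 < lam) {n k : ℕ} (hk : k ≤ n + 1) :
    (lam ^ k)⁻¹ * (1 / Real.sqrt lam) ^ (2 * (n : ℤ) + 2 - 2 * k) = (lam ^ (n + 1) : ℝ)⁻¹ := by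
  have hexp : 2 * (n : ℤ) + 2 - 2 * k = 2 * ((n : ℤ) + 1 - k) := by ring
  rw [hexp, zpow_mul, delta_zpow_two hlam, inv_zpow, ← zpow_neg,
    ← zpow_natCast lam k, ← zpow_neg, ← zpow_add₀ hlam.ne',
    show -(k : ℤ) + -((n : ℤ) + 1 - k) = -((n : ℤ) + 1) by ring]
  rw [show ((n : ℤ) + 1) = ((n + 1 : ℕ) : ℤ) by push_cast; ring, zpow_neg, zpow_natCast]

lemma pow_fact2 (hlam : 0 < lam) (n : ℕ) : (lam ^ (n + 2) : ℝ)⁻¹ * lam = (lam ^ (n + 1) : ℝ)⁻¹ := by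
  have h1 : lam ^ (n + 2) = lam ^ (n + 1) * lam := pow_succ lam (n + 1)
  rw [h1, mul_inv]
  field_simp

lemma norm_Phi_small (hn : 1 ≤ n) (hlam : 0 < lam) (hA : 0 < A)
    (hbd : ∀ t, t ≤ n + 2 → ∀ y ∈ Icc (-r) r,
      |iteratedDerivWithin t Q (Icc (-r) r) y| ≤ A * |y| ^ (2 * n + 1 - t))
    {k : ℕ} (hk1 : 1 ≤ k) (hk2 : k ≤ n + 1) {y : ℝ} (hy : y ∈ Icc (-r) r) (hy0 : y ≠ 0)
    (hyδ : |y| = 1 / Real.sqrt lam) :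
    ‖Phi n lam r Q k y‖ ≤ CB n k * A * (lam ^ (n + 1))⁻¹ := by
  have h := norm_Phi_le hn hlam hA hbd hk1 (by omega) hy hy0
  rw [hyδ] at h
  calc ‖Phi n lam r Q k y‖
      ≤ CB n k * A * (lam ^ k)⁻¹ * (1 / Real.sqrt lam) ^ (2 * (n : ℤ) + 2 - 2 * k) := h
    _ = CB n k * A * ((lam ^ k)⁻¹ * (1 / Real.sqrt lam) ^ (2 * (n : ℤ) + 2 - 2 * k)) := by ring
    _ = CB n k * A * (lam ^ (n + 1))⁻¹ := by rw [pow_fact1 hlam hk2]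

lemma norm_Phi_top (hn : 1 ≤ n) (hlam : 0 < lam) (hA : 0 < A)
    (hbd : ∀ t, t ≤ n + 2 → ∀ y ∈ Icc (-r) r,
      |iteratedDerivWithin t Q (Icc (-r) r) y| ≤ A * |y| ^ (2 * n + 1 - t))
    {y : ℝ} (hy : y ∈ Icc (-r) r) (hy0 : y ≠ 0)
    (hyδ : 1 / Real.sqrt lam ≤ |y|) :
    ‖Phi n lam r Q (n + 2) y‖ ≤ CB n (n + 2) * A * (lam ^ (n + 1))⁻¹ := by
  have h := norm_Phi_le hn hlam hA hbd (by omega : 1 ≤ n + 2) le_rfl hy hy0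
  have hδpos : (0 : ℝ) < 1 / Real.sqrt lam := by positivity
  have hay : (0 : ℝ) < |y| := lt_of_lt_of_le hδpos hyδ
  have hexp : 2 * (n : ℤ) + 2 - 2 * ((n + 2 : ℕ) : ℤ) = -2 := by push_cast; ring
  rw [hexp] at h
  have hmono : |y| ^ (-2 : ℤ) ≤ (1 / Real.sqrt lam) ^ (-2 : ℤ) := by
    rw [zpow_neg, zpow_neg]
    apply inv_anti₀ (zpow_pos hδpos _)
    rw [show (2 : ℤ) = ((2 : ℕ) : ℤ) from rfl, zpow_natCast, zpow_natCast]
    exact pow_le_pow_left₀ hδpos.le hyδ _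
  calc ‖Phi n lam r Q (n + 2) y‖
      ≤ CB n (n + 2) * A * (lam ^ (n + 2))⁻¹ * |y| ^ (-2 : ℤ) := h
    _ ≤ CB n (n + 2) * A * (lam ^ (n + 2))⁻¹ * (1 / Real.sqrt lam) ^ (-2 : ℤ) := by
        apply mul_le_mul_of_nonneg_left hmono
        exact mul_nonneg (mul_nonneg (CB_nonneg n (n+2)) hA.le) (by positivity)
    _ = CB n (n + 2) * A * ((lam ^ (n + 2))⁻¹ * lam) := by
        rw [delta_zpow_neg_two hlam]; ring
    _ = CB n (n + 2) * A * (lam ^ (n + 1))⁻¹ := by rw [pow_fact2 hlam]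

end Main

/-- Let `n ≥ 1`, `λ > 0`, `A > 0`, `r ≥ λ^{−1/2}`, and let
`Q : [−r,r] → ℝ` be `n+2` times continuously differentiable with
`|Q^{(t)}(y)| ≤ A|y|^{2n+1−t}` for `0 ≤ t ≤ n+2`.  With `ψ₁(y) = Q(y)/(4πiλy)` and
`ψ_k(y) = −ψ'_{k−1}(y)/(4πiλy)` for `2 ≤ k ≤ n+1` (for `y ≠ 0`), one has
`∫_{−r}^{r} Q(y) e(λy²) dy = [e(λy²) Σ_{k=1}^{n+1} ψ_k(y)]_{−r}^{r} + O(A λ^{−(n+1)})`,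
with implied constant depending only on `n`. -/
theorem weighted_stationary_phase_stmt17 (n : ℕ) (hn : 1 ≤ n) :
    ∃ K : ℝ, 0 < K ∧
      ∀ (lam A r : ℝ) (Q : ℝ → ℝ) (ψ : ℕ → ℝ → ℂ),
        0 < lam → 0 < A → 1 / Real.sqrt lam ≤ r →
        ContDiffOn ℝ (n + 2) Q (Set.Icc (-r) r) →
        (∀ t, t ≤ n + 2 → ∀ y ∈ Set.Icc (-r) r,
          |iteratedDerivWithin t Q (Set.Icc (-r) r) y| ≤ A * |y| ^ (2 * n + 1 - t)) →
        (∀ y ∈ Set.Icc (-r) r, y ≠ 0 →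
          ψ 1 y = (Q y : ℂ) / (4 * Real.pi * Complex.I * lam * y)) →
        (∀ k, 2 ≤ k → k ≤ n + 1 → ∀ y ∈ Set.Icc (-r) r, y ≠ 0 →
          ψ k y = -(derivWithin (ψ (k - 1)) (Set.Icc (-r) r) y) /
            (4 * Real.pi * Complex.I * lam * y)) →
        ‖(∫ y in (-r)..r, (Q y : ℂ) * e (lam * y ^ 2)) -
            ((fun y : ℝ => e (lam * y ^ 2) * ∑ k ∈ Finset.Icc 1 (n + 1), ψ k y) r -
             (fun y : ℝ => e (lam * y ^ 2) * ∑ k ∈ Finset.Icc 1 (n + 1), ψ k y) (-r))‖ ≤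
          K * (A / lam ^ (n + 1)) := by
  have hS1 : (0:ℝ) ≤ ∑ k ∈ Finset.Icc 1 (n + 1), CB n k :=
    Finset.sum_nonneg fun k _ => CB_nonneg n k
  have hS2 : (0:ℝ) ≤ CB n (n + 2) := CB_nonneg n (n + 2)
  have hS3 : (0:ℝ) ≤ CBd n (n + 2) := CBd_nonneg n (n + 2)
  refine ⟨3 + 2 * (∑ k ∈ Finset.Icc 1 (n + 1), CB n k) + 4 * CB n (n + 2) + 2 * CBd n (n + 2),
    by linarith, ?_⟩
  intro lam A r Q ψ hlam hA hr hQ hbd hψ1 hψk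
  set S1 : ℝ := ∑ k ∈ Finset.Icc 1 (n + 1), CB n k with hS1def
  set S2 : ℝ := CB n (n + 2) with hS2def
  set S3 : ℝ := CBd n (n + 2) with hS3def
  set d : ℝ := 1 / Real.sqrt lam with hddef
  set AL : ℝ := A * (lam ^ (n + 1))⁻¹ with hALdef
  have hALpos : 0 < AL := by positivity
  have hspos : 0 < Real.sqrt lam := Real.sqrt_pos.2 hlam
  have hdpos : 0 < d := by positivity
  have hr0 : 0 < r := lt_of_lt_of_le hdpos hr
  have hrne : r ≠ 0 := hr0.ne'
  have hmrne : (-r : ℝ) ≠ 0 := neg_ne_zero.2 hrne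
  have hdne : d ≠ 0 := hdpos.ne'
  have hmdne : (-d : ℝ) ≠ 0 := neg_ne_zero.2 hdne
  have hrmem : r ∈ Set.Icc (-r) r := ⟨by linarith, le_rfl⟩
  have hmrmem : -r ∈ Set.Icc (-r) r := ⟨le_rfl, by linarith⟩
  have hdmem : d ∈ Set.Icc (-r) r := ⟨by linarith, hr⟩
  have hmdmem : -d ∈ Set.Icc (-r) r := ⟨by linarith, by linarith⟩
  have habsd : |d| = d := abs_of_pos hdpos
  have habsmd : |(-d : ℝ)| = d := by rw [abs_neg, habsd]
  have habsr : |r| = r := abs_of_pos hr0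
  have habsmr : |(-r : ℝ)| = r := by rw [abs_neg, habsr]
  -- rewrite ψ sums as Φ sums
  have hpsi : ∀ y, y ∈ Set.Icc (-r) r → y ≠ 0 →
      (∑ k ∈ Finset.Icc 1 (n + 1), ψ k y) = ∑ k ∈ Finset.Icc 1 (n + 1), Phi n lam r Q k y :=
    fun y hy hy0 => Finset.sum_congr rfl fun k hk => by
      rw [Finset.mem_Icc] at hk
      exact psi_eq_Phi hlam hr0 hQ hψ1 hψk k hk.1 hk.2 y hy hy0
  -- integrability of Q·e
  have hQeC : ContinuousOn (fun y : ℝ => (Q y : ℂ) * e (lam * y ^ 2)) (Set.Icc (-r) r) :=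
    (Complex.continuous_ofReal.comp_continuousOn hQ.continuousOn).mul
      (continuous_e lam).continuousOn
  have hIQ : ∀ a b : ℝ, a ≤ b → Set.Icc a b ⊆ Set.Icc (-r) r →
      IntervalIntegrable (fun y : ℝ => (Q y : ℂ) * e (lam * y ^ 2))
        MeasureTheory.volume a b := by
    intro a b hab hsub
    apply ContinuousOn.intervalIntegrable
    rw [uIcc_of_le hab]
    exact hQeC.mono hsub
  have e1 := intervalIntegral.integral_add_adjacent_intervals
    (hIQ (-r) (-d) (by linarith) (Set.Icc_subset_Icc le_rfl (by linarith)))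
    (hIQ (-d) d (by linarith) (Set.Icc_subset_Icc (by linarith) hr))
  have e2 := intervalIntegral.integral_add_adjacent_intervals
    (hIQ (-r) d (by linarith) (Set.Icc_subset_Icc le_rfl hr))
    (hIQ d r hr (Set.Icc_subset_Icc (by linarith) le_rfl))
  -- FTC on the two side intervals
  have hsub_pos : Set.Icc d r ⊆ Set.Icc (-r) r := Set.Icc_subset_Icc (by linarith) le_rfl
  have h0pos : (0:ℝ) ∉ Set.Icc d r := fun h => absurd h.1 (not_le.2 hdpos)
  have hsub_neg : Set.Icc (-r) (-d) ⊆ Set.Icc (-r) r := Set.Icc_subset_Icc le_rfl (by linarith)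
  have h0neg : (0:ℝ) ∉ Set.Icc (-r) (-d) := fun h => absurd h.2 (not_le.2 (by linarith))
  have hpos := FTC_piece hn hlam hr0 hQ hr hsub_pos h0pos
  have hneg := FTC_piece hn hlam hr0 hQ (by linarith : -r ≤ -d) hsub_neg h0neg
  have hsub_pos' : Set.Icc d r ⊆ Set.Icc (-r) r \ {0} := fun x hx =>
    ⟨hsub_pos hx, by simp; exact ne_of_gt (lt_of_lt_of_le hdpos hx.1)⟩
  have hsub_neg' : Set.Icc (-r) (-d) ⊆ Set.Icc (-r) r \ {0} := fun x hx =>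
    ⟨hsub_neg hx, by simp; exact ne_of_lt (lt_of_le_of_lt hx.2 (by linarith))⟩
  have hPeC : ∀ a b : ℝ, a ≤ b → Set.Icc a b ⊆ Set.Icc (-r) r \ {0} →
      IntervalIntegrable (fun y : ℝ => Phid n lam r Q (n + 2) y * e (lam * y ^ 2))
        MeasureTheory.volume a b := by
    intro a b hab hsub
    apply ContinuousOn.intervalIntegrable
    rw [uIcc_of_le hab]
    exact ((continuousOn_Phid hQ hr0 le_rfl).mono hsub).mul (continuous_e lam).continuousOn
  rw [intervalIntegral.integral_add (hIQ d r hr hsub_pos) (hPeC d r hr hsub_pos')] at hpos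
  rw [intervalIntegral.integral_add (hIQ (-r) (-d) (by linarith) hsub_neg)
    (hPeC (-r) (-d) (by linarith) hsub_neg')] at hneg
  have hI3 := eq_sub_of_add_eq hpos
  have hI1 := eq_sub_of_add_eq hneg
  -- the main algebraic identity
  have hkey : (∫ y in (-r)..r, (Q y : ℂ) * e (lam * y ^ 2)) -
      (e (lam * r ^ 2) * (∑ k ∈ Finset.Icc 1 (n + 1), Phi n lam r Q k r)
        - e (lam * (-r) ^ 2) * (∑ k ∈ Finset.Icc 1 (n + 1), Phi n lam r Q k (-r)))
      = (((((∫ y in (-d)..d, (Q y : ℂ) * e (lam * y ^ 2))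
          - (∫ y in d..r, Phid n lam r Q (n + 2) y * e (lam * y ^ 2)))
          - (∫ y in (-r)..(-d), Phid n lam r Q (n + 2) y * e (lam * y ^ 2)))
          + (e (lam * r ^ 2) * Phi n lam r Q (n + 2) r
             - e (lam * (-r) ^ 2) * Phi n lam r Q (n + 2) (-r)))
          - e (lam * d ^ 2) * ((∑ k ∈ Finset.Icc 1 (n + 1), Phi n lam r Q k d)
              + Phi n lam r Q (n + 2) d))
          + e (lam * (-d) ^ 2) * ((∑ k ∈ Finset.Icc 1 (n + 1), Phi n lam r Q k (-d))
              + Phi n lam r Q (n + 2) (-d)) := by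
    rw [show (∫ y in (-r)..r, (Q y : ℂ) * e (lam * y ^ 2))
        = ((∫ y in (-r)..(-d), (Q y : ℂ) * e (lam * y ^ 2))
          + (∫ y in (-d)..d, (Q y : ℂ) * e (lam * y ^ 2)))
          + (∫ y in d..r, (Q y : ℂ) * e (lam * y ^ 2)) by rw [e1, e2]]
    rw [hI1, hI3]
    ring
  -- bound 1 : central integral
  have hX1 : ‖∫ y in (-d)..d, (Q y : ℂ) * e (lam * y ^ 2)‖ ≤ 2 * AL := by
    have hCb : ∀ x ∈ Set.uIoc (-d) d, ‖(Q x : ℂ) * e (lam * x ^ 2)‖ ≤ A * d ^ (2 * n + 1) := by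
      intro x hx
      rw [Set.uIoc_of_le (by linarith : -d ≤ d)] at hx
      have hx' : x ∈ Set.Icc (-d) d := ⟨le_of_lt hx.1, hx.2⟩
      have hxmem : x ∈ Set.Icc (-r) r := ⟨by linarith [hx'.1], by linarith [hx'.2]⟩
      have h0 := hbd 0 (by omega) x hxmem
      rw [iteratedDerivWithin_zero] at h0
      have habsx : |x| ≤ d := abs_le.2 ⟨hx'.1, hx'.2⟩
      rw [norm_mul, norm_e, mul_one, Complex.norm_real, Real.norm_eq_abs]
      calc |Q x| ≤ A * |x| ^ (2 * n + 1 - 0) := h0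
        _ = A * |x| ^ (2 * n + 1) := by norm_num
        _ ≤ A * d ^ (2 * n + 1) := by
            apply mul_le_mul_of_nonneg_left _ hA.le
            exact pow_le_pow_left₀ (abs_nonneg x) habsx _
    have h := intervalIntegral.norm_integral_le_of_norm_le_const hCb
    have habs2d : |d - -d| = 2 * d := by rw [abs_of_pos (by linarith : (0:ℝ) < d - -d)]; ring
    rw [habs2d] at h
    have hd2 : d ^ (2 * n + 2) = (lam ^ (n + 1))⁻¹ := by
      rw [show 2 * n + 2 = 2 * (n + 1) by ring, pow_mul, delta_sq hlam, inv_pow]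
    calc ‖∫ y in (-d)..d, (Q y : ℂ) * e (lam * y ^ 2)‖
        ≤ A * d ^ (2 * n + 1) * (2 * d) := h
      _ = 2 * (A * d ^ (2 * n + 2)) := by rw [pow_succ]; ring
      _ = 2 * AL := by rw [hd2]
  -- bound for the positive-side remainder integral
  have hMbd : ∀ y : ℝ, y ∈ Set.Icc (-r) r → y ≠ 0 →
      ‖Phid n lam r Q (n + 2) y‖
        ≤ (S3 * A * (lam ^ (n + 2))⁻¹) * |y| ^ (-3 : ℤ) := by
    intro y hy hy0
    have h := norm_Phid_le hn hlam hA hbd (by omega : 1 ≤ n + 2) le_rfl hy hy0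
    have hexp : 2 * (n : ℤ) + 1 - 2 * ((n + 2 : ℕ) : ℤ) = -3 := by push_cast; ring
    rw [hexp] at h
    calc ‖Phid n lam r Q (n + 2) y‖ ≤ CBd n (n + 2) * A * (lam ^ (n + 2))⁻¹ * |y| ^ (-3:ℤ) := h
      _ = (S3 * A * (lam ^ (n + 2))⁻¹) * |y| ^ (-3 : ℤ) := by rw [hS3def]
  have hfinpow : (S3 * A * (lam ^ (n + 2))⁻¹) * d ^ (-2 : ℤ) / 2 ≤ S3 * AL := by
    rw [delta_zpow_neg_two hlam]
    have : S3 * A * (lam ^ (n + 2))⁻¹ * lam = S3 * A * ((lam ^ (n + 2))⁻¹ * lam) := by ring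
    rw [this, pow_fact2 hlam]
    have hALn : 0 ≤ S3 * (A * (lam ^ (n + 1))⁻¹) := by positivity
    calc S3 * A * (lam ^ (n + 1))⁻¹ / 2 ≤ S3 * A * (lam ^ (n + 1))⁻¹ := by
          nlinarith [mul_nonneg (mul_nonneg hS3 hA.le) (by positivity : (0:ℝ) ≤ (lam ^ (n+1))⁻¹)]
      _ = S3 * AL := by rw [hALdef]; ring
  have hX3 : ‖∫ y in d..r, Phid n lam r Q (n + 2) y * e (lam * y ^ 2)‖ ≤ S3 * AL := by
    have hb : ∀ y ∈ Set.Icc d r,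
        ‖Phid n lam r Q (n + 2) y * e (lam * y ^ 2)‖
          ≤ (S3 * A * (lam ^ (n + 2))⁻¹) * y ^ (-3 : ℤ) := by
      intro y hy
      have hy0 : y ≠ 0 := ne_of_gt (lt_of_lt_of_le hdpos hy.1)
      have := hMbd y (hsub_pos hy) hy0
      rw [norm_mul, norm_e, mul_one]
      rwa [abs_of_pos (lt_of_lt_of_le hdpos hy.1)] at this
    have hcont : ContinuousOn (fun y : ℝ => Phid n lam r Q (n + 2) y * e (lam * y ^ 2))
        (Set.Icc d r) :=
      ((continuousOn_Phid hQ hr0 le_rfl).mono hsub_pos').mul (continuous_e lam).continuousOn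
    exact le_trans (integral_bound hdpos hr hcont hb) hfinpow
  have hX2 : ‖∫ y in (-r)..(-d), Phid n lam r Q (n + 2) y * e (lam * y ^ 2)‖ ≤ S3 * AL := by
    have hflip : (∫ y in (-r)..(-d), Phid n lam r Q (n + 2) y * e (lam * y ^ 2))
        = ∫ y in d..r, Phid n lam r Q (n + 2) (-y) * e (lam * (-y) ^ 2) := by
      exact (intervalIntegral.integral_comp_neg
        (fun y : ℝ => Phid n lam r Q (n + 2) y * e (lam * y ^ 2))).symm
    rw [hflip]
    have hmaps : Set.MapsTo (fun y : ℝ => -y) (Set.Icc d r) (Set.Icc (-r) (-d)) :=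
      fun y hy => ⟨by simp; linarith [hy.2], by simp; linarith [hy.1]⟩
    have hcont : ContinuousOn
        (fun y : ℝ => Phid n lam r Q (n + 2) (-y) * e (lam * (-y) ^ 2)) (Set.Icc d r) := by
      apply ContinuousOn.mul
      · exact (((continuousOn_Phid hQ hr0 le_rfl).mono hsub_neg')).comp
          continuous_neg.continuousOn hmaps
      · exact ((continuous_e lam).comp continuous_neg).continuousOn
    have hb : ∀ y ∈ Set.Icc d r,
        ‖Phid n lam r Q (n + 2) (-y) * e (lam * (-y) ^ 2)‖
          ≤ (S3 * A * (lam ^ (n + 2))⁻¹) * y ^ (-3 : ℤ) := by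
      intro y hy
      have hy0' : -y ≠ 0 := neg_ne_zero.2 (ne_of_gt (lt_of_lt_of_le hdpos hy.1))
      have hmem' : -y ∈ Set.Icc (-r) r := hsub_neg (hmaps hy)
      have := hMbd (-y) hmem' hy0'
      rw [norm_mul, norm_e, mul_one]
      rwa [abs_neg, abs_of_pos (lt_of_lt_of_le hdpos hy.1)] at this
    exact le_trans (integral_bound hdpos hr hcont hb) hfinpow
  -- endpoint bounds
  have hX4 : ‖e (lam * r ^ 2) * Phi n lam r Q (n + 2) r‖ ≤ S2 * AL := by
    rw [norm_mul, norm_e, one_mul]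
    have := norm_Phi_top hn hlam hA hbd hrmem hrne (by rw [habsr]; exact hr)
    calc ‖Phi n lam r Q (n + 2) r‖ ≤ CB n (n + 2) * A * (lam ^ (n + 1))⁻¹ := this
      _ = S2 * AL := by rw [hS2def, hALdef]; ring
  have hX5 : ‖e (lam * (-r) ^ 2) * Phi n lam r Q (n + 2) (-r)‖ ≤ S2 * AL := by
    rw [norm_mul, norm_e, one_mul]
    have := norm_Phi_top hn hlam hA hbd hmrmem hmrne (by rw [habsmr]; exact hr)
    calc ‖Phi n lam r Q (n + 2) (-r)‖ ≤ CB n (n + 2) * A * (lam ^ (n + 1))⁻¹ := this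
      _ = S2 * AL := by rw [hS2def, hALdef]; ring
  have hHH : ∀ y : ℝ, y ∈ Set.Icc (-r) r → y ≠ 0 → |y| = d →
      ‖e (lam * y ^ 2) * ((∑ k ∈ Finset.Icc 1 (n + 1), Phi n lam r Q k y)
        + Phi n lam r Q (n + 2) y)‖ ≤ (S1 + S2) * AL := by
    intro y hy hy0 hyd
    rw [norm_mul, norm_e, one_mul]
    have hsum : ‖∑ k ∈ Finset.Icc 1 (n + 1), Phi n lam r Q k y‖ ≤ S1 * AL := by
      calc ‖∑ k ∈ Finset.Icc 1 (n + 1), Phi n lam r Q k y‖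
          ≤ ∑ k ∈ Finset.Icc 1 (n + 1), ‖Phi n lam r Q k y‖ := norm_sum_le _ _
        _ ≤ ∑ k ∈ Finset.Icc 1 (n + 1), CB n k * AL := by
            apply Finset.sum_le_sum
            intro k hk
            rw [Finset.mem_Icc] at hk
            have := norm_Phi_small hn hlam hA hbd hk.1 hk.2 hy hy0 hyd
            calc ‖Phi n lam r Q k y‖ ≤ CB n k * A * (lam ^ (n + 1))⁻¹ := this
              _ = CB n k * AL := by rw [hALdef]; ring
        _ = S1 * AL := by rw [hS1def, ← Finset.sum_mul]
    have htop : ‖Phi n lam r Q (n + 2) y‖ ≤ S2 * AL := by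
      have := norm_Phi_top hn hlam hA hbd hy hy0 (le_of_eq hyd.symm)
      calc ‖Phi n lam r Q (n + 2) y‖ ≤ CB n (n + 2) * A * (lam ^ (n + 1))⁻¹ := this
        _ = S2 * AL := by rw [hS2def, hALdef]; ring
    calc ‖(∑ k ∈ Finset.Icc 1 (n + 1), Phi n lam r Q k y) + Phi n lam r Q (n + 2) y‖
        ≤ ‖∑ k ∈ Finset.Icc 1 (n + 1), Phi n lam r Q k y‖ + ‖Phi n lam r Q (n + 2) y‖ :=
          norm_add_le _ _
      _ ≤ S1 * AL + S2 * AL := add_le_add hsum htop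
      _ = (S1 + S2) * AL := by ring
  have hX6 := hHH d hdmem hdne habsd
  have hX7 := hHH (-d) hmdmem hmdne habsmd
  -- put everything together
  rw [show ‖(∫ y in (-r)..r, (Q y : ℂ) * e (lam * y ^ 2)) -
      ((fun y : ℝ => e (lam * y ^ 2) * ∑ k ∈ Finset.Icc 1 (n + 1), ψ k y) r -
       (fun y : ℝ => e (lam * y ^ 2) * ∑ k ∈ Finset.Icc 1 (n + 1), ψ k y) (-r))‖
      = ‖(∫ y in (-r)..r, (Q y : ℂ) * e (lam * y ^ 2)) -
        (e (lam * r ^ 2) * (∑ k ∈ Finset.Icc 1 (n + 1), Phi n lam r Q k r)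
          - e (lam * (-r) ^ 2) * (∑ k ∈ Finset.Icc 1 (n + 1), Phi n lam r Q k (-r)))‖ by
    simp only []
    rw [hpsi r hrmem hrne, hpsi (-r) hmrmem hmrne]]
  rw [hkey]
  have hEnorm : ‖(((((∫ y in (-d)..d, (Q y : ℂ) * e (lam * y ^ 2))
      - (∫ y in d..r, Phid n lam r Q (n + 2) y * e (lam * y ^ 2)))
      - (∫ y in (-r)..(-d), Phid n lam r Q (n + 2) y * e (lam * y ^ 2)))
      + (e (lam * r ^ 2) * Phi n lam r Q (n + 2) r
         - e (lam * (-r) ^ 2) * Phi n lam r Q (n + 2) (-r)))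
      - e (lam * d ^ 2) * ((∑ k ∈ Finset.Icc 1 (n + 1), Phi n lam r Q k d)
          + Phi n lam r Q (n + 2) d))
      + e (lam * (-d) ^ 2) * ((∑ k ∈ Finset.Icc 1 (n + 1), Phi n lam r Q k (-d))
          + Phi n lam r Q (n + 2) (-d))‖
      ≤ ((((2 * AL + S3 * AL) + S3 * AL) + (S2 * AL + S2 * AL)) + (S1 + S2) * AL)
        + (S1 + S2) * AL := by
    refine le_trans (norm_add_le _ _) (add_le_add ?_ hX7)
    refine le_trans (norm_sub_le _ _) (add_le_add ?_ hX6)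
    refine le_trans (norm_add_le _ _) (add_le_add ?_ ?_)
    · refine le_trans (norm_sub_le _ _) (add_le_add ?_ hX2)
      exact le_trans (norm_sub_le _ _) (add_le_add hX1 hX3)
    · exact le_trans (norm_sub_le _ _) (add_le_add hX4 hX5)
  refine le_trans hEnorm ?_
  rw [div_eq_mul_inv]
  have hALeq : A * (lam ^ (n + 1))⁻¹ = AL := by rw [hALdef]
  rw [hALeq]
  nlinarith [hALpos.le]
end

section
/- Let n ≥ 1 be an integer, let I and J be real intervals, and let x : J → I be an n+1 times continuously differentiable map with x'(y) ≠ 0 for all y ∈ J. Let f : I → ℝ be n+1 times continuously differentiable with f'(x(y)) ≠ 0 for all y ∈ J, and let g : I → ℝ be n times continuously differentiable. Set F(y) = f(x(y)) and G(y) = g(x(y))·x'(y). Define H_1 = g/(2πi f'), H_k = −H'_{k−1}/(2πi f') on I (for k ≥ 2, wherever defined), and θ_1 = G/(2πi F'), θ_k = −θ'_{k−1}/(2πi F') on J. Then θ_k(y) = H_k(x(y)) for all y ∈ J and all 1 ≤ k ≤ n+1. -/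
/-- change of variables intertwines the integration-by-parts weights:
with `F = f ∘ x`, `G = (g ∘ x)·x'`, `H₁ = g/(2πif')`, `H_k = −H'_{k−1}/(2πif')`,
`θ₁ = G/(2πiF')`, `θ_k = −θ'_{k−1}/(2πiF')`, one has `θ_k(y) = H_k(x(y))` on `J`
for `1 ≤ k ≤ n+1`. -/
theorem weighted_stationary_phase_stmt18
    (n : ℕ) (hn : 1 ≤ n) (I J : Set ℝ)
    (hIint : I.OrdConnected) (hJint : J.OrdConnected)
    (hUI : UniqueDiffOn ℝ I) (hUJ : UniqueDiffOn ℝ J)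
    (x f g : ℝ → ℝ) (H θ : ℕ → ℝ → ℂ)
    (hmap : Set.MapsTo x J I)
    (hx : ContDiffOn ℝ (n + 1) x J)
    (hf : ContDiffOn ℝ (n + 1) f I)
    (hg : ContDiffOn ℝ n g I)
    (hx' : ∀ y ∈ J, derivWithin x J y ≠ 0)
    (hf' : ∀ y ∈ J, derivWithin f I (x y) ≠ 0)
    (hH1 : ∀ t ∈ I, H 1 t = (g t : ℂ) / (2 * Real.pi * Complex.I * derivWithin f I t))
    (hHk : ∀ k, 2 ≤ k → k ≤ n + 1 → ∀ t ∈ I,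
      H k t = -(derivWithin (H (k - 1)) I t) / (2 * Real.pi * Complex.I * derivWithin f I t))
    (hθ1 : ∀ y ∈ J, θ 1 y =
      ((g (x y) * derivWithin x J y : ℝ) : ℂ) /
        (2 * Real.pi * Complex.I * derivWithin (fun z => f (x z)) J y))
    (hθk : ∀ k, 2 ≤ k → k ≤ n + 1 → ∀ y ∈ J,
      θ k y = -(derivWithin (θ (k - 1)) J y) /
        (2 * Real.pi * Complex.I * derivWithin (fun z => f (x z)) J y)) :
    ∀ y ∈ J, ∀ k, 1 ≤ k → k ≤ n + 1 → θ k y = H k (x y) := by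
  set f' : ℝ → ℝ := derivWithin f I with hf'def
  have hc : (2 * Real.pi * Complex.I : ℂ) ≠ 0 := by
    simp [Real.pi_ne_zero, Complex.I_ne_zero, Complex.ofReal_ne_zero]
  -- f' is C^n on I
  have hf'cd : ContDiffOn ℝ n f' I := hf.derivWithin hUI le_rfl
  have hf'cont : ContinuousOn f' I := hf'cd.continuousOn
  -- the good set S
  set S : Set ℝ := I ∩ f' ⁻¹' {0}ᶜ with hSdef
  have hSsub : S ⊆ I := Set.inter_subset_left
  have hSne : ∀ t ∈ S, f' t ≠ 0 := fun t ht => ht.2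
  have hSnhds : ∀ t ∈ S, S ∈ nhdsWithin t I := by
    intro t ht
    have h1 : f' ⁻¹' {0}ᶜ ∈ nhdsWithin t I :=
      (hf'cont t ht.1) (isOpen_compl_singleton.mem_nhds ht.2)
    exact Filter.inter_mem self_mem_nhdsWithin h1
  have hS_eq : ∀ t ∈ S, nhdsWithin t S = nhdsWithin t I := by
    intro t ht
    have h := (nhdsWithin_restrict'' I (hSnhds t ht)).symm
    rwa [Set.inter_eq_self_of_subset_right hSsub] at h
  have hUS : UniqueDiffOn ℝ S := fun t ht =>
    (uniqueDiffWithinAt_congr (hS_eq t ht)).2 (hUI t ht.1)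
  have hxS : ∀ y ∈ J, x y ∈ S := fun y hy => ⟨hmap hy, hf' y hy⟩
  -- chain rule for F
  have hxd : ∀ y ∈ J, DifferentiableWithinAt ℝ x J y := by
    intro y hy
    exact (hx.differentiableOn (by simp)) y hy
  have hfd : ∀ y ∈ J, DifferentiableWithinAt ℝ f I (x y) := by
    intro y hy
    exact (hf.differentiableOn (by simp)) (x y) (hmap hy)
  have hF' : ∀ y ∈ J, derivWithin (fun z => f (x z)) J y
      = derivWithin x J y * f' (x y) := by
    intro y hy
    have := derivWithin.scomp (𝕜 := ℝ) (𝕜' := ℝ) y (hfd y hy) (hxd y hy) hmap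
    simpa [Function.comp_def, smul_eq_mul] using this
  -- main induction
  have key : ∀ k, 1 ≤ k → k ≤ n + 1 →
      ContDiffOn ℝ (↑(n + 1 - k)) (H k) S ∧ ∀ y ∈ J, θ k y = H k (x y) := by
    intro k
    induction k with
    | zero => intro h; omega
    | succ k ih =>
      intro _ hk2
      rcases Nat.eq_zero_or_pos k with hk0 | hk1
      · -- base case k+1 = 1
        subst hk0
        constructor
        · have hform : ContDiffOn ℝ (↑n) (fun t => (g t : ℂ) *
              (2 * Real.pi * Complex.I * (f' t : ℂ))⁻¹) S := by
            have hgS : ContDiffOn ℝ (↑n) (fun t => (g t : ℂ)) S :=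
              Complex.ofRealCLM.contDiff.comp_contDiffOn (hg.mono hSsub)
            have hfS : ContDiffOn ℝ (↑n) (fun t => (f' t : ℂ)) S :=
              Complex.ofRealCLM.contDiff.comp_contDiffOn (hf'cd.mono hSsub)
            exact hgS.mul ((contDiffOn_const.mul hfS).inv
              (fun t ht => mul_ne_zero hc (Complex.ofReal_ne_zero.2 (hSne t ht))))
          have : (↑(n + 1 - 1) : ℕ∞) = (↑n : ℕ∞) := by norm_num
          rw [show n + 1 - 1 = n from rfl]
          exact hform.congr (fun t ht => by rw [hH1 t ht.1, div_eq_mul_inv])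
        · intro y hy
          have ha : (f' (x y) : ℂ) ≠ 0 := Complex.ofReal_ne_zero.2 (hf' y hy)
          have hb : ((derivWithin x J y : ℝ) : ℂ) ≠ 0 := Complex.ofReal_ne_zero.2 (hx' y hy)
          rw [hθ1 y hy, hH1 (x y) (hmap hy), hF' y hy]
          push_cast
          field_simp
      · -- inductive step: k ≥ 1
        obtain ⟨ihcd, ihval⟩ := ih hk1 (by omega)
        have hm1 : (1 : WithTop ℕ∞) ≤ ↑(n + 1 - k) := by
          exact_mod_cast Nat.one_le_iff_ne_zero.2 (by omega)
        have hHkdiff : ∀ t ∈ S, DifferentiableWithinAt ℝ (H k) S t := fun t ht =>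
          (ihcd t ht).differentiableWithinAt (zero_lt_one.trans_le hm1).ne'
        have hDeq : ∀ t ∈ S, derivWithin (H k) I t = derivWithin (H k) S t := by
          intro t ht
          exact derivWithin_of_mem_nhdsWithin (hSnhds t ht) (hUI t ht.1) (hHkdiff t ht)
        have hD : ContDiffOn ℝ (↑(n - k)) (derivWithin (H k) S) S := by
          refine ihcd.derivWithin hUS ?_
          have : n + 1 - k = (n - k) + 1 := by omega
          rw [this]
          exact_mod_cast le_rfl
        have hcd : ContDiffOn ℝ (↑(n + 1 - (k + 1))) (H (k + 1)) S := by
          have hform : ContDiffOn ℝ (↑(n - k)) (fun t => -(derivWithin (H k) S t) *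
              (2 * Real.pi * Complex.I * (f' t : ℂ))⁻¹) S := by
            have hfS : ContDiffOn ℝ (↑(n - k)) (fun t => (f' t : ℂ)) S :=
              Complex.ofRealCLM.contDiff.comp_contDiffOn
                ((hf'cd.mono hSsub).of_le (by exact_mod_cast Nat.sub_le n k))
            exact hD.neg.mul ((contDiffOn_const.mul hfS).inv
              (fun t ht => mul_ne_zero hc (Complex.ofReal_ne_zero.2 (hSne t ht))))
          rw [show n + 1 - (k + 1) = n - k from by omega]
          refine hform.congr (fun t ht => ?_)
          rw [hHk (k + 1) (by omega) hk2 t ht.1, div_eq_mul_inv]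
          simp [hDeq t ht]
        refine ⟨hcd, fun y hy => ?_⟩
        have hxyS : x y ∈ S := hxS y hy
        have hHdI : DifferentiableWithinAt ℝ (H k) I (x y) :=
          (hHkdiff (x y) hxyS).mono_of_mem_nhdsWithin (hSnhds (x y) hxyS)
        have hθd : derivWithin (θ k) J y = derivWithin (fun z => H k (x z)) J y :=
          derivWithin_congr (fun z hz => ihval z hz) (ihval y hy)
        have hcomp : derivWithin (fun z => H k (x z)) J y
            = ((derivWithin x J y : ℝ) : ℂ) * derivWithin (H k) I (x y) := by
          have := derivWithin.scomp (𝕜 := ℝ) (𝕜' := ℝ) y hHdI (hxd y hy) hmap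
          simpa [Function.comp_def, Complex.real_smul] using this
        have ha : (f' (x y) : ℂ) ≠ 0 := Complex.ofReal_ne_zero.2 (hf' y hy)
        have hb : ((derivWithin x J y : ℝ) : ℂ) ≠ 0 := Complex.ofReal_ne_zero.2 (hx' y hy)
        rw [hθk (k + 1) (by omega) hk2 y hy, hHk (k + 1) (by omega) hk2 (x y) (hmap hy)]
        simp only [Nat.add_sub_cancel]
        rw [hθd, hcomp, hF' y hy]
        push_cast
        field_simp
  intro y hy k hk1 hk2
  exact (key k hk1 hk2).2 y hy
end
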